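/- arXiv:2203.02254 — 5 statements merged into one kernel-verified Lean document; each statement's English description precedes it below -/
import Mathlib

section
/- For every complex number z with |z| < 1, the integral of 1/|1 − z·conj(η)| over the unit circle with respect to normalized arc length equals the series Σ_{j=0}^{∞} ( (1/2)_j )² / (j!)² · |z|^{2j}, where (1/2)_j = Γ(1/2 + j)/Γ(1/2) is the Pochhammer symbol. -/
open Complex MeasureTheory Finset

noncomputable def cc : ℕ → ℝ := fun n => ∏ k ∈ Finset.range n, ((k + 1/2) / (k + 1))

lemma cc_zero : cc 0 = 1 := by simp [cc]

lemma cc_succ (n : ℕ) : cc (n+1) = cc n * ((n + 1/2) / (n + 1)) := by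
  rw [cc, cc, Finset.prod_range_succ]

lemma cc_pos (n : ℕ) : 0 < cc n := by
  apply Finset.prod_pos; intro k _; positivity

lemma cc_le_one (n : ℕ) : cc n ≤ 1 := by
  apply Finset.prod_le_one
  · intro k _; positivity
  · intro k _
    rw [div_le_one (by positivity)]
    linarith

lemma cc_rec (n : ℕ) : ((n:ℝ) + 1) * cc (n+1) = ((n:ℝ) + 1/2) * cc n := by
  rw [cc_succ]; field_simp

lemma gamma_cc (n : ℕ) : Real.Gamma (1/2 + n) / Real.Gamma (1/2) = cc n * n.factorial := by
  induction n with
  | zero =>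
      rw [Nat.cast_zero, add_zero, div_self (Real.Gamma_pos_of_pos (by norm_num : (0:ℝ) < 1/2)).ne']
      simp [cc_zero]
  | succ n ih =>
      have h : (1/2 : ℝ) + (n+1 : ℕ) = (1/2 + n) + 1 := by push_cast; ring
      rw [h, Real.Gamma_add_one (by positivity), mul_div_assoc, ih]
      have := cc_rec n
      push_cast [Nat.factorial_succ]
      nlinarith [cc_pos n, (n.factorial : ℝ)]

lemma cc_refl_sum (m : ℕ) :
    2 * (∑ k ∈ Finset.range (m+1), (k:ℝ) * (cc k * cc (m-k)))
      = m * ∑ k ∈ Finset.range (m+1), cc k * cc (m-k) := by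
  have h := Finset.sum_range_reflect (fun k => (k:ℝ) * (cc k * cc (m-k))) (m+1)
  have e : ∀ j ∈ Finset.range (m+1),
      ((m + 1 - 1 - j : ℕ) : ℝ) * (cc (m+1-1-j) * cc (m - (m+1-1-j)))
        = ((m:ℝ) - j) * (cc (m-j) * cc j) := by
    intro j hj
    rw [Finset.mem_range] at hj
    have hj' : j ≤ m := Nat.lt_succ_iff.mp hj
    have : m + 1 - 1 - j = m - j := by omega
    rw [this, Nat.sub_sub_self hj', Nat.cast_sub hj']
  rw [Finset.sum_congr rfl e] at h
  rw [two_mul]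
  nth_rewrite 1 [← h]
  rw [← Finset.sum_add_distrib, Finset.mul_sum]
  apply Finset.sum_congr rfl
  intro j hj
  ring

lemma cc_conv (n : ℕ) : ∑ k ∈ Finset.range (n+1), cc k * cc (n - k) = 1 := by
  induction n with
  | zero => simp [cc_zero]
  | succ n ih =>
      have key : ((n:ℝ)+1) * (∑ k ∈ Finset.range (n+2), cc k * cc (n+1-k))
          = ((n:ℝ)+1) * (∑ k ∈ Finset.range (n+1), cc k * cc (n-k)) := by
        have h1 := cc_refl_sum (n+1)
        have h2 := cc_refl_sum n
        -- shift: ∑_{k∈range(n+2)} k * (cc k * cc (n+1-k)) = ∑_{i∈range(n+1)} (i+1)*(cc (i+1) * cc (n-i))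
        have h3 : ∑ k ∈ Finset.range (n+2), (k:ℝ) * (cc k * cc (n+1-k))
            = ∑ i ∈ Finset.range (n+1), ((i:ℝ) + 1/2) * (cc i * cc (n-i)) := by
          rw [Finset.sum_range_succ' (fun k => (k:ℝ) * (cc k * cc (n+1-k))) (n+1)]
          simp only [Nat.cast_zero, zero_mul, add_zero]
          apply Finset.sum_congr rfl
          intro i _
          have : n + 1 - (i + 1) = n - i := by omega
          rw [this]
          push_cast
          have := cc_rec i
          nlinarith [cc_pos (n - i)]
        push_cast at h1 h2 h3 ⊢
        -- h1 : 2 * ∑_{range(n+2)} k*(cc k * cc (n+1-k)) = (n+1) * d(n+1)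
        -- via h3 : LHS = 2 * ∑ (i+1/2)(cc i cc (n-i)) = 2B + d n = n d n + d n
        rw [h3] at h1
        have expand : ∑ i ∈ Finset.range (n+1), ((i:ℝ) + 1/2) * (cc i * cc (n-i))
            = (∑ i ∈ Finset.range (n+1), (i:ℝ) * (cc i * cc (n-i)))
              + (1/2) * ∑ i ∈ Finset.range (n+1), cc i * cc (n-i) := by
          rw [Finset.mul_sum, ← Finset.sum_add_distrib]
          apply Finset.sum_congr rfl; intro i _; ring
        rw [expand] at h1
        linarith
      have hne : ((n:ℝ)+1) ≠ 0 := by positivity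
      have := mul_left_cancel₀ hne key
      rw [this, ih]

theorem circle_integral_inv_norm_eq_series (z : ℂ) (hz : ‖z‖ < 1) :
    (2 * Real.pi)⁻¹ *
        ∫ θ in (0:ℝ)..(2 * Real.pi),
          1 / ‖1 - z * (starRingEnd ℂ) (Complex.exp (θ * Complex.I))‖ =
      ∑' j : ℕ,
        (Real.Gamma (1 / 2 + j) / Real.Gamma (1 / 2)) ^ 2 / ((j.factorial : ℝ)) ^ 2 *
          ‖z‖ ^ (2 * j) := by
  have pi_pos := Real.pi_pos
  set r : ℝ := ‖z‖ with hr
  -- the circle parametrization and its conjugate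
  set w : ℝ → ℂ := fun θ => z * (starRingEnd ℂ) (Complex.exp (θ * Complex.I)) with hwdef
  have hwnorm : ∀ θ : ℝ, ‖w θ‖ = r := by
    intro θ
    simp [w, Complex.norm_exp_ofReal_mul_I θ, hr]
  have hwlt : ∀ θ : ℝ, ‖w θ‖ < 1 := fun θ => by rw [hwnorm]; exact hz
  -- the summand and summability
  set f : ℕ → ℝ → ℂ := fun j θ => (cc j : ℂ) * (w θ) ^ j with hfdef
  have hfnorm : ∀ j θ, ‖f j θ‖ = cc j * r ^ j := by
    intro j θ
    simp [f, abs_of_pos (cc_pos j), hwnorm θ]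
  have hs : Summable fun j => cc j * r ^ j := by
    apply Summable.of_nonneg_of_le (fun j => mul_nonneg (cc_pos j).le (by positivity))
      (fun j => ?_) (summable_geometric_of_lt_one (norm_nonneg z) hz)
    calc cc j * r ^ j ≤ 1 * r ^ j := by
          apply mul_le_mul_of_nonneg_right (cc_le_one j) (by positivity)
      _ = r ^ j := one_mul _
  have hsnorm : ∀ θ : ℝ, Summable fun j => ‖f j θ‖ := by
    intro θ; simpa only [hfnorm] using hs
  set h : ℝ → ℂ := fun θ => ∑' j, f j θ with hhdef
  -- square of h is the geometric series
  have hsq : ∀ θ : ℝ, h θ ^ 2 = (1 - w θ)⁻¹ := by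
    intro θ
    rw [sq, hhdef]
    rw [tsum_mul_tsum_eq_tsum_sum_range_of_summable_norm (hsnorm θ) (hsnorm θ)]
    have : ∀ n : ℕ, ∑ k ∈ Finset.range (n+1), f k θ * f (n-k) θ = (w θ) ^ n := by
      intro n
      have : ∀ k ∈ Finset.range (n+1), f k θ * f (n-k) θ
          = ((cc k * cc (n-k) : ℝ) : ℂ) * (w θ) ^ n := by
        intro k hk
        rw [Finset.mem_range, Nat.lt_succ_iff] at hk
        simp only [f]
        push_cast
        rw [show (cc k : ℂ) * w θ ^ k * ((cc (n-k) : ℂ) * w θ ^ (n-k))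
            = ((cc k : ℂ) * cc (n-k)) * (w θ ^ k * w θ ^ (n-k)) by ring,
          ← pow_add, Nat.add_sub_cancel' hk]
      rw [Finset.sum_congr rfl this, ← Finset.sum_mul, ← Complex.ofReal_sum]
      rw [cc_conv n]
      simp
    rw [tsum_congr this, tsum_geometric_of_norm_lt_one (hwlt θ)]
  have hone_sub_ne : ∀ θ : ℝ, (1 : ℂ) - w θ ≠ 0 := by
    intro θ
    intro hcon
    have h1 : ‖w θ‖ = 1 := by rw [← sub_eq_zero.mp hcon]; simp
    exact absurd (h1 ▸ hwlt θ) (lt_irrefl _)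
  -- pointwise identity : the real integrand is h * conj h
  have hpoint : ∀ θ : ℝ, ((1 / ‖1 - w θ‖ : ℝ) : ℂ) = h θ * (starRingEnd ℂ) (h θ) := by
    intro θ
    rw [Complex.mul_conj]
    congr 1
    rw [Complex.normSq_eq_norm_sq, ← norm_pow, hsq θ, norm_inv, one_div]
  -- conjugate of h
  have hconj : ∀ θ : ℝ, (starRingEnd ℂ) (h θ) = ∑' k, (starRingEnd ℂ) (f k θ) := by
    intro θ
    have h1 : HasSum (fun k => f k θ) (h θ) := ((hsnorm θ).of_norm).hasSum
    have h2 := h1.mapL Complex.conjCLE.toContinuousLinearMap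
    simp only [ContinuousLinearEquiv.coe_coe, Complex.conjCLE_apply] at h2
    exact h2.tsum_eq.symm
  have hsnormconj : ∀ θ : ℝ, Summable fun k => ‖(starRingEnd ℂ) (f k θ)‖ := by
    intro θ
    simpa only [RCLike.norm_conj] using hsnorm θ
  -- the double series terms
  set C : ℕ × ℕ → ℂ :=
    fun p => ((cc p.1 * cc p.2 : ℝ) : ℂ) * z ^ p.1 * ((starRingEnd ℂ) z) ^ p.2 with hCdef
  set t : ℕ × ℕ → ℝ → ℂ :=
    fun p θ => C p * Complex.exp ((((p.2 : ℂ) - p.1) * Complex.I) * θ) with htdef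
  have hterm : ∀ (p : ℕ × ℕ) (θ : ℝ),
      f p.1 θ * (starRingEnd ℂ) (f p.2 θ) = t p θ := by
    intro p θ
    have he : (starRingEnd ℂ) (Complex.exp (θ * Complex.I))
        = Complex.exp (-(θ:ℂ) * Complex.I) := by
      rw [← Complex.exp_conj, map_mul, Complex.conj_ofReal, Complex.conj_I]
      ring_nf
    have hexp : Complex.exp (-(θ:ℂ) * Complex.I) ^ p.1
        * Complex.exp ((θ:ℂ) * Complex.I) ^ p.2
        = Complex.exp ((((p.2 : ℂ) - p.1) * Complex.I) * θ) := by
      rw [← Complex.exp_nat_mul, ← Complex.exp_nat_mul, ← Complex.exp_add]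
      congr 1
      push_cast
      ring
    have he2 : (starRingEnd ℂ) (Complex.exp (-(θ:ℂ) * Complex.I))
        = Complex.exp ((θ:ℂ) * Complex.I) := by
      rw [← Complex.exp_conj, map_mul, map_neg, Complex.conj_ofReal, Complex.conj_I]
      ring_nf
    simp only [f, t, C, hwdef, map_mul, map_pow, Complex.conj_ofReal, Complex.conj_conj, he, he2,
      mul_pow]
    push_cast
    calc (cc p.1 : ℂ) * (z ^ p.1 * Complex.exp (-(θ:ℂ) * Complex.I) ^ p.1)
          * ((cc p.2 : ℂ) * (((starRingEnd ℂ) z) ^ p.2 * Complex.exp ((θ:ℂ) * Complex.I) ^ p.2))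
        = (cc p.1 : ℂ) * (cc p.2 : ℂ) * z ^ p.1 * ((starRingEnd ℂ) z) ^ p.2
          * (Complex.exp (-(θ:ℂ) * Complex.I) ^ p.1 * Complex.exp ((θ:ℂ) * Complex.I) ^ p.2) := by
          ring
      _ = (cc p.1 : ℂ) * (cc p.2 : ℂ) * z ^ p.1 * ((starRingEnd ℂ) z) ^ p.2
          * Complex.exp ((((p.2 : ℂ) - p.1) * Complex.I) * θ) := by rw [hexp]
  -- expand the product as a double sum
  have hdouble : ∀ θ : ℝ, h θ * (starRingEnd ℂ) (h θ) = ∑' p : ℕ × ℕ, t p θ := by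
    intro θ
    rw [hconj θ]
    rw [tsum_mul_tsum_of_summable_norm (hsnorm θ) (hsnormconj θ)]
    exact tsum_congr fun p => hterm p θ
  -- norms of terms and coefficients
  have htnorm : ∀ (p : ℕ × ℕ) (θ : ℝ), ‖t p θ‖ = ‖C p‖ := by
    intro p θ
    have : (((p.2 : ℂ) - p.1) * Complex.I) * θ
        = (((((p.2:ℝ) - p.1) * θ : ℝ)) : ℂ) * Complex.I := by push_cast; ring
    rw [htdef]
    simp only []
    rw [this, norm_mul, Complex.norm_exp_ofReal_mul_I, mul_one]
  have hCnorm : ∀ p : ℕ × ℕ, ‖C p‖ = (cc p.1 * r ^ p.1) * (cc p.2 * r ^ p.2) := by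
    intro p
    have h1 : ‖((cc p.1 * cc p.2 : ℝ) : ℂ)‖ = cc p.1 * cc p.2 := by
      rw [Complex.norm_real, Real.norm_eq_abs, abs_of_pos (mul_pos (cc_pos _) (cc_pos _))]
    rw [hCdef]
    simp only [norm_mul, norm_pow, h1, RCLike.norm_conj]
    ring
  have hCsum : Summable fun p : ℕ × ℕ => ‖C p‖ := by
    have hs' : Summable fun j => ‖cc j * r ^ j‖ :=
      hs.congr fun j => (Real.norm_of_nonneg (mul_nonneg (cc_pos _).le (by positivity))).symm
    have := summable_mul_of_summable_norm (f := fun j => cc j * r ^ j)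
      (g := fun j => cc j * r ^ j) hs' hs'
    exact Summable.congr this fun p => (hCnorm p).symm
  -- value of each term's integral
  have hle : (0:ℝ) ≤ 2 * Real.pi := by positivity
  have hint : ∀ p : ℕ × ℕ, (∫ θ in (0:ℝ)..(2 * Real.pi), t p θ)
      = if p.1 = p.2 then ((2 * Real.pi : ℝ) : ℂ) * C p else 0 := by
    intro p
    by_cases hp : p.1 = p.2
    · rw [if_pos hp]
      have hconst : ∀ θ : ℝ, t p θ = C p := by
        intro θ
        rw [htdef]
        simp only [hp, sub_self, zero_mul, Complex.exp_zero, mul_one]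
      rw [intervalIntegral.integral_congr (fun θ _ => hconst θ),
        intervalIntegral.integral_const, sub_zero, Complex.real_smul]
    · rw [if_neg hp]
      have hc : ((p.2 : ℂ) - p.1) * Complex.I ≠ 0 := by
        apply mul_ne_zero _ Complex.I_ne_zero
        rw [sub_ne_zero]
        exact_mod_cast Ne.symm hp
      rw [htdef]
      simp only []
      rw [intervalIntegral.integral_const_mul, integral_exp_mul_complex hc]
      have h2 : ((p.2 : ℂ) - p.1) * Complex.I * ((2 * Real.pi : ℝ) : ℂ)
          = (((p.2 : ℤ) - (p.1 : ℤ) : ℤ) : ℂ) * (2 * Real.pi * Complex.I) := by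
        push_cast; ring
      rw [h2, Complex.exp_int_mul_two_pi_mul_I]
      norm_num
  -- swap the integral and the double sum
  have hmeas : ∀ p : ℕ × ℕ,
      AEStronglyMeasurable (t p) (volume.restrict (Set.Ioc (0:ℝ) (2 * Real.pi))) := by
    intro p
    apply Continuous.aestronglyMeasurable
    rw [htdef]
    simp only []
    fun_prop
  have hfin : ∑' p : ℕ × ℕ, ∫⁻ θ in Set.Ioc (0:ℝ) (2 * Real.pi), ‖t p θ‖₊ ≠ ⊤ := by
    have heval : ∀ p : ℕ × ℕ, ∫⁻ θ in Set.Ioc (0:ℝ) (2 * Real.pi), (‖t p θ‖₊ : ENNReal)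
        = ENNReal.ofReal (‖C p‖ * (2 * Real.pi)) := by
      intro p
      have h1 : ∀ θ : ℝ, (‖t p θ‖₊ : ENNReal) = ENNReal.ofReal ‖C p‖ := by
        intro θ; rw [← enorm_eq_nnnorm, ← ofReal_norm, htnorm]
      calc ∫⁻ θ in Set.Ioc (0:ℝ) (2 * Real.pi), (‖t p θ‖₊ : ENNReal)
          = ∫⁻ _ in Set.Ioc (0:ℝ) (2 * Real.pi), ENNReal.ofReal ‖C p‖ :=
            lintegral_congr fun θ => h1 θ
        _ = ENNReal.ofReal ‖C p‖ * volume (Set.Ioc (0:ℝ) (2 * Real.pi)) := by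
            rw [MeasureTheory.lintegral_const, Measure.restrict_apply_univ]
        _ = ENNReal.ofReal (‖C p‖ * (2 * Real.pi)) := by
            rw [Real.volume_Ioc, sub_zero, ← ENNReal.ofReal_mul (norm_nonneg _)]
    rw [tsum_congr heval,
      ← ENNReal.ofReal_tsum_of_nonneg (fun p => mul_nonneg (norm_nonneg _) hle)
        (hCsum.mul_right _)]
    exact ENNReal.ofReal_ne_top
  have hswap : (∫ θ in (0:ℝ)..(2 * Real.pi), ∑' p : ℕ × ℕ, t p θ)
      = ∑' p : ℕ × ℕ, ∫ θ in (0:ℝ)..(2 * Real.pi), t p θ := by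
    calc (∫ θ in (0:ℝ)..(2 * Real.pi), ∑' p : ℕ × ℕ, t p θ)
        = ∫ θ in Set.Ioc (0:ℝ) (2 * Real.pi), ∑' p : ℕ × ℕ, t p θ :=
          intervalIntegral.integral_of_le hle
      _ = ∑' p : ℕ × ℕ, ∫ θ in Set.Ioc (0:ℝ) (2 * Real.pi), t p θ :=
          MeasureTheory.integral_tsum hmeas hfin
      _ = ∑' p : ℕ × ℕ, ∫ θ in (0:ℝ)..(2 * Real.pi), t p θ :=
          tsum_congr fun p => (intervalIntegral.integral_of_le hle).symm
  -- the diagonal sum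
  have hCdiag : ∀ j : ℕ, C (j, j) = ((cc j ^ 2 * ‖z‖ ^ (2 * j) : ℝ) : ℂ) := by
    intro j
    rw [hCdef]
    simp only []
    rw [mul_assoc, ← mul_pow, Complex.mul_conj, Complex.normSq_eq_norm_sq]
    push_cast
    rw [← pow_mul]
    ring
  have hdiagsum : ∑' p : ℕ × ℕ, (if p.1 = p.2 then ((2 * Real.pi : ℝ) : ℂ) * C p else 0)
      = ((2 * Real.pi : ℝ) : ℂ) * ∑' j : ℕ, ((cc j ^ 2 * ‖z‖ ^ (2 * j) : ℝ) : ℂ) := by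
    have hFs : Summable fun p : ℕ × ℕ =>
        (if p.1 = p.2 then ((2 * Real.pi : ℝ) : ℂ) * C p else 0) := by
      apply Summable.of_norm_bounded (hCsum.mul_left (2 * Real.pi))
      intro p
      by_cases hp : p.1 = p.2
      · simp only [if_pos hp, norm_mul]
        apply mul_le_mul_of_nonneg_right _ (norm_nonneg _)
        rw [Complex.norm_real, Real.norm_eq_abs, abs_of_pos (by positivity)]
      · simp only [if_neg hp, norm_zero]
        positivity
    rw [Summable.tsum_prod' hFs hFs.prod_factor]
    have hinner : ∀ a : ℕ, (∑' b : ℕ, (if (a, b).1 = (a, b).2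
        then ((2 * Real.pi : ℝ) : ℂ) * C (a, b) else 0))
        = ((2 * Real.pi : ℝ) : ℂ) * ((cc a ^ 2 * ‖z‖ ^ (2 * a) : ℝ) : ℂ) := by
      intro a
      rw [tsum_eq_single a]
      · rw [if_pos rfl, hCdiag a]
      · intro b hb
        rw [if_neg]
        exact fun e => hb (e.symm)
    rw [tsum_congr hinner, tsum_mul_left]
  -- assemble
  have hfinal : ((∫ θ in (0:ℝ)..(2 * Real.pi),
      1 / ‖1 - z * (starRingEnd ℂ) (Complex.exp (θ * Complex.I))‖ : ℝ) : ℂ)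
      = (((2 * Real.pi) * ∑' j : ℕ, cc j ^ 2 * ‖z‖ ^ (2 * j) : ℝ) : ℂ) := by
    rw [← intervalIntegral.integral_ofReal]
    calc (∫ θ in (0:ℝ)..(2 * Real.pi),
        ((1 / ‖1 - z * (starRingEnd ℂ) (Complex.exp (θ * Complex.I))‖ : ℝ) : ℂ))
        = ∫ θ in (0:ℝ)..(2 * Real.pi), ∑' p : ℕ × ℕ, t p θ := by
          apply intervalIntegral.integral_congr
          intro θ _
          exact (hpoint θ).trans (hdouble θ)
      _ = ∑' p : ℕ × ℕ, ∫ θ in (0:ℝ)..(2 * Real.pi), t p θ := hswap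
      _ = ∑' p : ℕ × ℕ, (if p.1 = p.2 then ((2 * Real.pi : ℝ) : ℂ) * C p else 0) :=
          tsum_congr hint
      _ = ((2 * Real.pi : ℝ) : ℂ) * ∑' j : ℕ, ((cc j ^ 2 * ‖z‖ ^ (2 * j) : ℝ) : ℂ) := hdiagsum
      _ = (((2 * Real.pi) * ∑' j : ℕ, cc j ^ 2 * ‖z‖ ^ (2 * j) : ℝ) : ℂ) := by
          push_cast [Complex.ofReal_tsum]
          ring
  have hreal : (∫ θ in (0:ℝ)..(2 * Real.pi),
      1 / ‖1 - z * (starRingEnd ℂ) (Complex.exp (θ * Complex.I))‖)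
      = (2 * Real.pi) * ∑' j : ℕ, cc j ^ 2 * ‖z‖ ^ (2 * j) := by
    exact_mod_cast hfinal
  rw [hreal, ← mul_assoc, inv_mul_cancel₀ (by positivity), one_mul]
  refine tsum_congr fun j => ?_
  rw [gamma_cc, mul_pow, mul_div_assoc,
    div_self (pow_ne_zero 2 (Nat.cast_ne_zero.mpr j.factorial_ne_zero)), mul_one]
end

section
/- For every complex number z with |z| < 1, the integral ∫_T 1/|1 − z·conj(η)| ds(η) over the unit circle (with normalized arc length ds of total mass 1) is at most 1 + (1/π) · log(1/(1 − |z|²)). -/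
open Complex MeasureTheory

noncomputable def aseq : ℕ → ℝ
  | 0 => 1
  | (k+1) => aseq k * (2*k+1) / (2*k+2)

lemma aseq0 : aseq 0 = 1 := rfl

lemma aseq_nonneg (k : ℕ) : 0 ≤ aseq k := by
  induction k with
  | zero => norm_num [aseq]
  | succ n ih => rw [aseq]; positivity

lemma aseq_le_one (k : ℕ) : aseq k ≤ 1 := by
  induction k with
  | zero => norm_num [aseq]
  | succ n ih =>
    rw [aseq, div_le_one (by positivity)]
    nlinarith [aseq_nonneg n]

lemma aseq_rec (k : ℕ) : (2*(k:ℝ)+2) * aseq (k+1) = (2*k+1) * aseq k := by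
  rw [aseq]; field_simp

lemma aseq_eq_gamma (k : ℕ) :
    aseq k = Real.Gamma (k + 1/2) / (Real.sqrt Real.pi * k.factorial) := by
  induction k with
  | zero =>
    have : ((0:ℕ):ℝ) + 1/2 = 1/2 := by norm_num
    rw [this, Real.Gamma_one_half_eq]
    have : Real.sqrt Real.pi ≠ 0 := by positivity
    field_simp [aseq]
    simp [aseq0]
  | succ n ih =>
    have h1 : ((n:ℝ) + 1) + 1/2 = (n + 1/2) + 1 := by ring
    have h2 : Real.Gamma (((n:ℕ)+1 : ℕ) + 1/2) = (n + 1/2) * Real.Gamma (n + 1/2) := by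
      push_cast
      rw [h1, Real.Gamma_add_one (by positivity)]
    rw [aseq, ih, h2, Nat.factorial_succ]
    have hπ : Real.sqrt Real.pi ≠ 0 := by positivity
    have hf : (n.factorial : ℝ) ≠ 0 := by positivity
    field_simp
    push_cast
    ring

lemma gamma_half_le (j : ℕ) :
    Real.Gamma ((j:ℝ) + 1 + 1/2) ^ 2 ≤ Real.Gamma (j+1) * Real.Gamma (j+2) := by
  set x : ℝ := (j:ℝ) + 1
  have hx : (0:ℝ) < x := by positivity
  have hx1 : (0:ℝ) < x + 1 := by positivity
  have hc := Real.convexOn_log_Gamma.2 (Set.mem_Ioi.mpr hx) (Set.mem_Ioi.mpr hx1)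
      (by norm_num : (0:ℝ) ≤ 1/2) (by norm_num : (0:ℝ) ≤ 1/2) (by norm_num)
  simp only [smul_eq_mul, Function.comp_apply] at hc
  have hmid : (1/2 : ℝ) * x + (1/2) * (x+1) = x + 1/2 := by ring
  rw [hmid] at hc
  have hG : (0:ℝ) < Real.Gamma (x + 1/2) := Real.Gamma_pos_of_pos (by positivity)
  have hG1 : (0:ℝ) < Real.Gamma x := Real.Gamma_pos_of_pos hx
  have hG2 : (0:ℝ) < Real.Gamma (x+1) := Real.Gamma_pos_of_pos hx1
  have : Real.log (Real.Gamma (x+1/2) ^ 2) ≤ Real.log (Real.Gamma x * Real.Gamma (x+1)) := by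
    rw [Real.log_pow, Real.log_mul hG1.ne' hG2.ne']
    push_cast
    linarith
  have h2 : ((j:ℝ)+2) = x + 1 := by ring
  rw [h2]
  exact (Real.log_le_log_iff (by positivity) (by positivity)).mp this

lemma aseq_sq_le (j : ℕ) : aseq (j+1) ^ 2 ≤ 1 / (Real.pi * (j+1)) := by
  have hfact : Real.Gamma ((j:ℝ)+1) = j.factorial := by
    exact_mod_cast Real.Gamma_nat_eq_factorial j
  have hfact2 : Real.Gamma ((j:ℝ)+2) = (j+1).factorial := by
    have : ((j:ℝ)+2) = ((j+1:ℕ):ℝ) + 1 := by push_cast; ring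
    rw [this]
    exact_mod_cast Real.Gamma_nat_eq_factorial (j+1)
  have hb := gamma_half_le j
  rw [hfact, hfact2] at hb
  have h1 : aseq (j+1) = Real.Gamma ((j:ℝ) + 1 + 1/2) / (Real.sqrt Real.pi * (j+1).factorial) := by
    rw [aseq_eq_gamma]; push_cast; ring_nf
  rw [h1, div_pow]
  have hπ : (0:ℝ) < Real.pi := Real.pi_pos
  have hsq : Real.sqrt Real.pi ^ 2 = Real.pi := Real.sq_sqrt hπ.le
  have hfpos : (0:ℝ) < ((j+1).factorial : ℝ) := by positivity
  rw [mul_pow, hsq]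
  rw [div_le_div_iff₀ (by positivity) (by positivity)]
  calc Real.Gamma ((j:ℝ) + 1 + 1/2) ^ 2 * (Real.pi * ((j:ℝ)+1))
      ≤ ((j.factorial : ℝ) * (j+1).factorial) * (Real.pi * ((j:ℝ)+1)) := by
        apply mul_le_mul_of_nonneg_right hb (by positivity)
    _ = Real.pi * ((j+1).factorial : ℝ)^2 := by
        rw [Nat.factorial_succ]
        push_cast
        ring
    _ ≤ 1 * (Real.pi * ((j+1).factorial : ℝ)^2) := by rw [one_mul]

section
open Finset

lemma two_T_eq (n : ℕ) :
    2 * (∑ k ∈ range (n+1), (2*(k:ℝ)) * (aseq k * aseq (n-k)))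
      = 2 * n * ∑ k ∈ range (n+1), aseq k * aseq (n-k) := by
  have hrefl : ∑ k ∈ range (n+1), (2*((n:ℝ)-k)) * (aseq k * aseq (n-k))
      = ∑ k ∈ range (n+1), (2*(k:ℝ)) * (aseq k * aseq (n-k)) := by
    rw [← Finset.sum_range_reflect (fun k => (2*(k:ℝ)) * (aseq k * aseq (n-k))) (n+1)]
    apply Finset.sum_congr rfl
    intro k hk
    have hk' : k ≤ n := Nat.lt_succ_iff.mp (mem_range.mp hk)
    have h0 : n + 1 - 1 - k = n - k := by omega
    have h1 : n - (n - k) = k := by omega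
    rw [h0, h1, Nat.cast_sub hk']
    ring
  calc 2 * (∑ k ∈ range (n+1), (2*(k:ℝ)) * (aseq k * aseq (n-k)))
      = (∑ k ∈ range (n+1), (2*(k:ℝ)) * (aseq k * aseq (n-k)))
        + ∑ k ∈ range (n+1), (2*((n:ℝ)-k)) * (aseq k * aseq (n-k)) := by rw [hrefl]; ring
    _ = ∑ k ∈ range (n+1), ((2*(k:ℝ)) * (aseq k * aseq (n-k))
        + (2*((n:ℝ)-k)) * (aseq k * aseq (n-k))) := Finset.sum_add_distrib.symm
    _ = ∑ k ∈ range (n+1), 2*(n:ℝ) * (aseq k * aseq (n-k)) :=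
        Finset.sum_congr rfl fun k hk => by ring
    _ = 2 * n * ∑ k ∈ range (n+1), aseq k * aseq (n-k) := by rw [Finset.mul_sum]

lemma aseq_conv (n : ℕ) : ∑ k ∈ range (n+1), aseq k * aseq (n-k) = 1 := by
  induction n with
  | zero => simp [aseq0]
  | succ n ih =>
    have hT : ∑ k ∈ range (n+2), (2*(k:ℝ)) * (aseq k * aseq (n+1-k))
        = ((n:ℝ)+1) * ∑ k ∈ range (n+1), aseq k * aseq (n-k) := by
      rw [Finset.sum_range_succ' (fun k => (2*(k:ℝ)) * (aseq k * aseq (n+1-k))) (n+1)]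
      simp only [Nat.cast_zero, mul_zero, zero_mul, add_zero, Nat.cast_add, Nat.cast_one]
      have step : ∀ k : ℕ, (2*((k:ℝ)+1)) * (aseq (k+1) * aseq (n+1-(k+1)))
          = (2*(k:ℝ)) * (aseq k * aseq (n-k)) + aseq k * aseq (n-k) := by
        intro k
        have h1 : n + 1 - (k+1) = n - k := by omega
        have h : (2*((k:ℝ)+1)) * aseq (k+1) = (2*(k:ℝ)+1) * aseq k := by
          have := aseq_rec k; linarith
        rw [h1]
        calc (2*((k:ℝ)+1)) * (aseq (k+1) * aseq (n-k))
            = ((2*((k:ℝ)+1)) * aseq (k+1)) * aseq (n-k) := by ring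
          _ = ((2*(k:ℝ)+1) * aseq k) * aseq (n-k) := by rw [h]
          _ = (2*(k:ℝ)) * (aseq k * aseq (n-k)) + aseq k * aseq (n-k) := by ring
      rw [show (∑ k ∈ range (n+1), (2*((k:ℝ)+1)) * (aseq (k+1) * aseq (n+1-(k+1))))
          = ∑ k ∈ range (n+1), ((2*(k:ℝ)) * (aseq k * aseq (n-k)) + aseq k * aseq (n-k))
          from Finset.sum_congr rfl fun k _ => step k]
      rw [Finset.sum_add_distrib]
      have h2T := two_T_eq n
      linarith [h2T]
    have h2T' := two_T_eq (n+1)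
    push_cast at h2T'
    rw [show n + 1 + 1 = n + 2 from rfl] at h2T'
    rw [hT, ih, mul_one] at h2T'
    have hn1 : ((n:ℝ)+1) ≠ 0 := by positivity
    have : ((n:ℝ)+1) * (∑ k ∈ range (n+2), aseq k * aseq (n+1-k)) = ((n:ℝ)+1) * 1 := by
      rw [mul_one]; linarith
    exact mul_left_cancel₀ hn1 this

end

lemma summable_norm_aw {w : ℂ} (hw : ‖w‖ < 1) :
    Summable (fun k : ℕ => ‖(aseq k : ℂ) * w ^ k‖) := by
  apply Summable.of_nonneg_of_le (fun k => norm_nonneg _) (fun k => ?_)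
    (summable_geometric_of_lt_one (norm_nonneg w) hw)
  rw [norm_mul, norm_pow]
  calc ‖(aseq k : ℂ)‖ * ‖w‖ ^ k ≤ 1 * ‖w‖ ^ k := by
        apply mul_le_mul_of_nonneg_right _ (by positivity)
        rw [Complex.norm_real, Real.norm_of_nonneg (aseq_nonneg k)]
        exact aseq_le_one k
    _ = ‖w‖ ^ k := one_mul _

noncomputable def fsum (w : ℂ) : ℂ := ∑' k : ℕ, (aseq k : ℂ) * w ^ k

lemma fsum_sq {w : ℂ} (hw : ‖w‖ < 1) : fsum w * fsum w = (1 - w)⁻¹ := by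
  rw [fsum, tsum_mul_tsum_eq_tsum_sum_range_of_summable_norm (summable_norm_aw hw)
    (summable_norm_aw hw)]
  have h1 : ∀ n : ℕ, ∑ k ∈ Finset.range (n+1), (aseq k : ℂ) * w ^ k *
      ((aseq (n - k) : ℂ) * w ^ (n - k)) = w ^ n := by
    intro n
    have : ∀ k ∈ Finset.range (n+1), (aseq k : ℂ) * w ^ k *
        ((aseq (n - k) : ℂ) * w ^ (n - k)) = ((aseq k * aseq (n-k) : ℝ) : ℂ) * w ^ n := by
      intro k hk
      have hk' : k ≤ n := Nat.lt_succ_iff.mp (Finset.mem_range.mp hk)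
      have hpow : w ^ k * w ^ (n - k) = w ^ n := by
        rw [← pow_add, Nat.add_sub_cancel' hk']
      push_cast
      calc (aseq k : ℂ) * w ^ k * ((aseq (n - k) : ℂ) * w ^ (n - k))
          = (aseq k : ℂ) * (aseq (n-k) : ℂ) * (w ^ k * w ^ (n - k)) := by ring
        _ = (aseq k : ℂ) * (aseq (n-k) : ℂ) * w ^ n := by rw [hpow]
    rw [Finset.sum_congr rfl this, ← Finset.sum_mul, ← Complex.ofReal_sum]
    rw [aseq_conv n]
    simp
  calc (∑' n : ℕ, ∑ k ∈ Finset.range (n+1), (aseq k : ℂ) * w ^ k *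
        ((aseq (n - k) : ℂ) * w ^ (n - k))) = ∑' n : ℕ, w ^ n := by
        exact tsum_congr h1
    _ = (1 - w)⁻¹ := tsum_geometric_of_norm_lt_one hw


noncomputable def G (z : ℂ) (p : ℕ × ℕ) (θ : ℝ) : ℂ :=
  ((aseq p.1 * aseq p.2 : ℝ) : ℂ) * z ^ p.1 * ((starRingEnd ℂ) z) ^ p.2 *
    Complex.exp (((((p.2 : ℝ) - p.1) * θ : ℝ) : ℂ) * I)

lemma norm_fsum_sq {w : ℂ} (hw : ‖w‖ < 1) : (‖fsum w‖ : ℝ) ^ 2 = 1 / ‖1 - w‖ := by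
  have h := congrArg norm (fsum_sq hw)
  rw [norm_mul, norm_inv] at h
  rw [← sq] at h
  rw [h, one_div]

lemma pointwise_eq (z : ℂ) (hz : ‖z‖ < 1) (θ : ℝ) :
    ((1 / ‖1 - z * (starRingEnd ℂ) (Complex.exp (θ * I))‖ : ℝ) : ℂ)
      = ∑' p : ℕ × ℕ, G z p θ := by
  set η : ℂ := Complex.exp (θ * I) with hη
  set w : ℂ := z * (starRingEnd ℂ) η with hw
  have hηnorm : ‖η‖ = 1 := by
    rw [hη]
    exact Complex.norm_exp_ofReal_mul_I θ
  have hwnorm : ‖w‖ < 1 := by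
    rw [hw, norm_mul, RCLike.norm_conj, hηnorm, mul_one]
    exact hz
  -- step: conj η = exp(-θ I)
  have hconjη : (starRingEnd ℂ) η = Complex.exp (-(θ : ℂ) * I) := by
    rw [hη, ← Complex.exp_conj]
    congr 1
    simp [Complex.conj_ofReal]
  -- LHS = fsum w * conj (fsum w)
  have h1 : ((1 / ‖1 - w‖ : ℝ) : ℂ) = fsum w * (starRingEnd ℂ) (fsum w) := by
    rw [Complex.mul_conj]
    rw [← norm_fsum_sq hwnorm]
    norm_cast
    rw [Complex.normSq_eq_norm_sq]
  rw [h1]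
  -- conj of tsum
  have h2 : (starRingEnd ℂ) (fsum w) = ∑' l : ℕ, (starRingEnd ℂ) ((aseq l : ℂ) * w ^ l) := by
    rw [fsum]
    exact tsum_star
  have hg : Summable (fun l : ℕ => ‖(starRingEnd ℂ) ((aseq l : ℂ) * w ^ l)‖) := by
    simpa only [RCLike.norm_conj] using summable_norm_aw hwnorm
  rw [h2, fsum, tsum_mul_tsum_of_summable_norm (summable_norm_aw hwnorm) hg]
  apply tsum_congr
  intro p
  obtain ⟨k, l⟩ := p
  simp only [G]
  -- w ^ k = z^k * exp(-kθ I), conj(w^l) = conj z^l * exp(lθ I)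
  have hwk : w ^ k = z ^ k * Complex.exp (-(k : ℂ) * θ * I) := by
    rw [hw, mul_pow, hconjη, ← Complex.exp_nat_mul]
    ring_nf
  have hcwl : (starRingEnd ℂ) (w ^ l) = (starRingEnd ℂ) z ^ l * Complex.exp ((l : ℂ) * θ * I) := by
    rw [hw, mul_pow, map_mul, map_pow, map_pow, RingHomCompTriple.comp_apply,
      RingHom.id_apply, hη, ← Complex.exp_nat_mul]
    ring_nf
  rw [map_mul, hwk, hcwl]
  have hconj_a : (starRingEnd ℂ) ((aseq l : ℂ)) = (aseq l : ℂ) := Complex.conj_ofReal _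
  rw [hconj_a]
  have hexp : Complex.exp (-(k:ℂ) * θ * I) * Complex.exp ((l:ℂ) * θ * I)
      = Complex.exp (((((l:ℝ) - k) * θ : ℝ) : ℂ) * I) := by
    rw [← Complex.exp_add]
    congr 1
    push_cast
    ring
  calc (aseq k : ℂ) * (z ^ k * Complex.exp (-(k:ℂ) * θ * I)) *
        ((aseq l : ℂ) * ((starRingEnd ℂ) z ^ l * Complex.exp ((l:ℂ) * θ * I)))
      = (aseq k : ℂ) * (aseq l : ℂ) * z ^ k * (starRingEnd ℂ) z ^ l *
        (Complex.exp (-(k:ℂ) * θ * I) * Complex.exp ((l:ℂ) * θ * I)) := by ring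
    _ = ((aseq k * aseq l : ℝ) : ℂ) * z ^ k * (starRingEnd ℂ) z ^ l *
        Complex.exp (((((l:ℝ) - k) * θ : ℝ) : ℂ) * I) := by rw [hexp]; push_cast; ring

lemma summable_aw_real {q : ℝ} (h0 : 0 ≤ q) (hq : q < 1) :
    Summable (fun k : ℕ => aseq k * q ^ k) := by
  apply Summable.of_nonneg_of_le (fun k => mul_nonneg (aseq_nonneg k) (pow_nonneg h0 k)) (fun k => ?_)
    (summable_geometric_of_lt_one h0 hq)
  calc aseq k * q ^ k ≤ 1 * q ^ k :=
        mul_le_mul_of_nonneg_right (aseq_le_one k) (by positivity)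
    _ = q ^ k := one_mul _

lemma integral_eq (z : ℂ) (hz : ‖z‖ < 1) :
    (∫ θ in (0:ℝ)..(2 * Real.pi),
        ((1 / ‖1 - z * (starRingEnd ℂ) (Complex.exp (θ * I))‖ : ℝ) : ℂ))
      = ((2 * Real.pi * ∑' k : ℕ, aseq k ^ 2 * (‖z‖ ^ 2) ^ k : ℝ) : ℂ) := by
  have hle : (0:ℝ) ≤ 2 * Real.pi := by positivity
  rw [intervalIntegral.integral_of_le hle]
  set μ : Measure ℝ := volume.restrict (Set.Ioc 0 (2 * Real.pi)) with hμ
  have hμuniv : (μ Set.univ).toReal = 2 * Real.pi := by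
    rw [hμ, Measure.restrict_apply_univ, Real.volume_Ioc, sub_zero, ENNReal.toReal_ofReal hle]
  -- continuity and integrability
  have hGcont : ∀ p : ℕ × ℕ, Continuous (G z p) := by
    intro p
    apply Continuous.mul
    · exact continuous_const
    · exact Complex.continuous_exp.comp (by continuity)
  have hGint : ∀ p : ℕ × ℕ, Integrable (G z p) μ := by
    intro p
    rw [hμ]
    exact (hGcont p).integrableOn_Ioc
  -- norms
  have hGnorm : ∀ (p : ℕ × ℕ) (θ : ℝ),
      ‖G z p θ‖ = (aseq p.1 * ‖z‖ ^ p.1) * (aseq p.2 * ‖z‖ ^ p.2) := by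
    intro p θ
    rw [G, norm_mul, norm_mul, norm_mul, norm_pow, norm_pow, RCLike.norm_conj]
    rw [Complex.norm_exp_ofReal_mul_I]
    rw [Complex.norm_real, Real.norm_of_nonneg (mul_nonneg (aseq_nonneg p.1) (aseq_nonneg p.2))]
    ring
  have hintnorm : ∀ p : ℕ × ℕ, (∫ θ, ‖G z p θ‖ ∂μ)
      = 2 * Real.pi * ((aseq p.1 * ‖z‖ ^ p.1) * (aseq p.2 * ‖z‖ ^ p.2)) := by
    intro p
    simp only [hGnorm p]
    rw [integral_const, measureReal_def, hμuniv, smul_eq_mul]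
  have hsummable : Summable (fun p : ℕ × ℕ => ∫ θ, ‖G z p θ‖ ∂μ) := by
    simp only [hintnorm]
    exact (Summable.mul_of_nonneg (summable_aw_real (norm_nonneg z) hz)
      (summable_aw_real (norm_nonneg z) hz)
      (fun k => mul_nonneg (aseq_nonneg k) (pow_nonneg (norm_nonneg z) k))
      (fun k => mul_nonneg (aseq_nonneg k) (pow_nonneg (norm_nonneg z) k))).mul_left _
  -- interchange
  have hinter := integral_tsum_of_summable_integral_norm hGint hsummable
  have hptw : (∫ θ, (∑' p : ℕ × ℕ, G z p θ) ∂μ)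
      = ∫ θ, ((1 / ‖1 - z * (starRingEnd ℂ) (Complex.exp (θ * I))‖ : ℝ) : ℂ) ∂μ := by
    apply integral_congr_ae
    filter_upwards with θ
    rw [pointwise_eq z hz θ]
  rw [← hptw, ← hinter]
  -- compute each integral
  have hGval : ∀ p : ℕ × ℕ, (∫ θ, G z p θ ∂μ)
      = if p.1 = p.2 then ((2 * Real.pi * (aseq p.1 ^ 2 * (‖z‖ ^ 2) ^ p.1) : ℝ) : ℂ) else 0 := by
    rintro ⟨k, l⟩
    by_cases hkl : k = l
    · subst hkl
      simp only [if_pos rfl]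
      have hc : ∀ θ : ℝ, G z (k, k) θ
          = ((aseq k * aseq k : ℝ) : ℂ) * z ^ k * ((starRingEnd ℂ) z) ^ k := by
        intro θ
        rw [G]
        have : ((((k : ℝ) - (k:ℝ)) * θ : ℝ) : ℂ) * I = 0 := by
          simp
        rw [this, Complex.exp_zero, mul_one]
      simp only [hc]
      rw [integral_const, measureReal_def, hμuniv, if_true]
      have hzz : z ^ k * ((starRingEnd ℂ) z) ^ k = ((((‖z‖ ^ 2 : ℝ)) ^ k : ℝ) : ℂ) := by
        rw [← mul_pow, Complex.mul_conj]
        norm_cast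
        rw [Complex.normSq_eq_norm_sq]
      calc (2 * Real.pi) • (((aseq k * aseq k : ℝ) : ℂ) * z ^ k * ((starRingEnd ℂ) z) ^ k)
          = ((2 * Real.pi : ℝ) : ℂ) * (((aseq k * aseq k : ℝ) : ℂ) *
            (z ^ k * ((starRingEnd ℂ) z) ^ k)) := by rw [Complex.real_smul]; push_cast; ring
        _ = ((2 * Real.pi : ℝ) : ℂ) * (((aseq k * aseq k : ℝ) : ℂ) *
            ((((‖z‖ ^ 2 : ℝ)) ^ k : ℝ) : ℂ)) := by rw [hzz]
        _ = ((2 * Real.pi * (aseq k ^ 2 * (‖z‖ ^ 2) ^ k) : ℝ) : ℂ) := by push_cast; ring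
    · simp only [if_neg hkl]
      set cc : ℂ := (((l:ℝ) - (k:ℝ) : ℝ) : ℂ) * I with hcc
      have hccne : cc ≠ 0 := by
        rw [hcc]
        intro h
        rcases mul_eq_zero.mp h with h1 | h2
        · have h' : ((l:ℝ) - (k:ℝ) : ℝ) = 0 := by exact_mod_cast h1
          have : (l:ℝ) = k := by linarith
          exact hkl (by exact_mod_cast this.symm)
        · exact Complex.I_ne_zero h2
      have hform : ∀ θ : ℝ, G z (k, l) θ
          = (((aseq k * aseq l : ℝ) : ℂ) * z ^ k * ((starRingEnd ℂ) z) ^ l) *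
            Complex.exp (cc * θ) := by
        intro θ
        rw [G, hcc]
        congr 2
        push_cast
        ring
      simp only [hform]
      rw [integral_const_mul, hμ, ← intervalIntegral.integral_of_le hle,
        integral_exp_mul_complex hccne]
      have h2π : cc * (2 * Real.pi : ℝ) = ((((l : ℤ) - (k : ℤ) : ℤ)) : ℂ) * (2 * (Real.pi : ℂ) * I) := by
        rw [hcc]; push_cast; ring
      have h0 : cc * ((0:ℝ) : ℂ) = 0 := by rw [hcc]; simp
      rw [h2π, h0, Complex.exp_zero, Complex.exp_int_mul_two_pi_mul_I]
      simp
  -- sum over diagonal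
  have hsum2 : Summable (fun p : ℕ × ℕ => ∫ θ, G z p θ ∂μ) :=
    Summable.of_norm_bounded hsummable (fun p => norm_integral_le_integral_norm _)
  rw [Summable.tsum_prod' hsum2 (fun k => hsum2.prod_factor k)]
  have hdiag : ∀ k : ℕ, (∑' l : ℕ, ∫ θ, G z (k, l) θ ∂μ)
      = ((2 * Real.pi * (aseq k ^ 2 * (‖z‖ ^ 2) ^ k) : ℝ) : ℂ) := by
    intro k
    rw [tsum_eq_single k (fun l hl => by rw [hGval (k, l)]; simp [Ne.symm hl])]
    rw [hGval (k, k)]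
    simp
  rw [tsum_congr hdiag]
  rw [← Complex.ofReal_tsum]
  norm_cast
  rw [← tsum_mul_left]

lemma summable_sq {q : ℝ} (h0 : 0 ≤ q) (hq : q < 1) :
    Summable (fun k : ℕ => aseq k ^ 2 * q ^ k) := by
  apply Summable.of_nonneg_of_le (fun k => mul_nonneg (sq_nonneg _) (pow_nonneg h0 k))
    (fun k => ?_) (summable_geometric_of_lt_one h0 hq)
  calc aseq k ^ 2 * q ^ k ≤ 1 * q ^ k := by
        apply mul_le_mul_of_nonneg_right _ (pow_nonneg h0 k)
        calc aseq k ^ 2 ≤ 1 ^ 2 := by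
              apply pow_le_pow_left₀ (aseq_nonneg k) (aseq_le_one k)
          _ = 1 := one_pow 2
    _ = q ^ k := one_mul _

set_option maxHeartbeats 1000000 in
lemma tsum_bound {q : ℝ} (h0 : 0 ≤ q) (hq : q < 1) :
    (∑' k : ℕ, aseq k ^ 2 * q ^ k) ≤ 1 + (1 / Real.pi) * Real.log (1 / (1 - q)) := by
  have hsum := summable_sq h0 hq
  rw [Summable.tsum_eq_zero_add hsum]
  simp only [pow_zero, mul_one, aseq0, one_pow]
  have hlog : HasSum (fun n : ℕ => (1 / Real.pi) * (q ^ (n + 1) / (n + 1)))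
      ((1 / Real.pi) * (-Real.log (1 - q))) :=
    (Real.hasSum_pow_div_log_of_abs_lt_one (by rw [_root_.abs_of_nonneg h0]; exact hq)).mul_left _
  have hterm : ∀ k : ℕ, aseq (k+1) ^ 2 * q ^ (k+1) ≤ (1 / Real.pi) * (q ^ (k+1) / (k+1)) := by
    intro k
    have h1 := aseq_sq_le k
    have h2 : aseq (k+1) ^ 2 * q ^ (k+1) ≤ (1 / (Real.pi * (k+1))) * q ^ (k+1) :=
      mul_le_mul_of_nonneg_right h1 (pow_nonneg h0 _)
    calc aseq (k+1) ^ 2 * q ^ (k+1) ≤ (1 / (Real.pi * (k+1))) * q ^ (k+1) := h2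
      _ = (1 / Real.pi) * (q ^ (k+1) / (k+1)) := by
          push_cast
          field_simp
  have hle := Summable.tsum_le_tsum hterm ((summable_nat_add_iff 1).mpr hsum) hlog.summable
  rw [hlog.tsum_eq] at hle
  have hlog_eq : -Real.log (1 - q) = Real.log (1 / (1 - q)) := by
    rw [one_div, Real.log_inv]
  rw [hlog_eq] at hle
  linarith

theorem circle_integral_inv_norm_le (z : ℂ) (hz : ‖z‖ < 1) :
    (2 * Real.pi)⁻¹ *
        ∫ θ in (0:ℝ)..(2 * Real.pi),
          1 / ‖1 - z * (starRingEnd ℂ) (Complex.exp (θ * Complex.I))‖ ≤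
      1 + (1 / Real.pi) * Real.log (1 / (1 - ‖z‖ ^ 2)) := by
  have h := integral_eq z hz
  rw [intervalIntegral.integral_ofReal] at h
  have h2 : (∫ θ in (0:ℝ)..(2 * Real.pi),
      1 / ‖1 - z * (starRingEnd ℂ) (Complex.exp (θ * Complex.I))‖)
      = 2 * Real.pi * ∑' k : ℕ, aseq k ^ 2 * (‖z‖ ^ 2) ^ k := Complex.ofReal_inj.mp h
  rw [h2]
  have hπ : (2 * Real.pi) ≠ 0 := by positivity
  rw [inv_mul_cancel_left₀ hπ]
  exact tsum_bound (by positivity) (by nlinarith [norm_nonneg z])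
end

section
/- Let f be a bounded holomorphic function on the open unit disk and let k ≥ 0 be an integer. Then for every z in the unit disk, the difference between f(z) and its k-th Taylor polynomial P_k f(z) = Σ_{j=0}^{k} f̂(j) z^j satisfies |f(z) − P_k f(z)| ≤ |z|^{k+1} · (1 + (1/π) log(1/(1 − |z|²))) · sup_{|w|<1} |f(w)|. -/
open Complex

section TrbReal
open Real intervalIntegral MeasureTheory

lemma trb_upos {s : ℝ} (h1 : s < 1) (h2 : -1 < s) (θ : ℝ) :
    0 < 1 - 2*s*Real.cos θ + s^2 := by
  rcases le_or_gt 0 s with hs | hs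
  · nlinarith [Real.cos_le_one θ, mul_pos (sub_pos.2 h1) (sub_pos.2 h1)]
  · nlinarith [Real.neg_one_le_cos θ, mul_pos (sub_pos.2 (by linarith : s < 1)) (sub_pos.2 h2)]

lemma trb_hasDerivAt_Q {s : ℝ} (h1 : s < 1) (h2 : -1 < s) (θ : ℝ) :
    HasDerivAt (fun θ => Real.sin θ / Real.sqrt (1 - 2*s*Real.cos θ + s^2))
      ((1 - s*Real.cos θ)*(Real.cos θ - s) /
        ((1 - 2*s*Real.cos θ + s^2) * Real.sqrt (1 - 2*s*Real.cos θ + s^2))) θ := by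
  have hu := trb_upos h1 h2 θ
  have hsq : Real.sqrt (1 - 2*s*Real.cos θ + s^2) ^ 2 = 1 - 2*s*Real.cos θ + s^2 :=
    Real.sq_sqrt hu.le
  have hsqpos : 0 < Real.sqrt (1 - 2*s*Real.cos θ + s^2) := Real.sqrt_pos.2 hu
  have hU : HasDerivAt (fun θ => 1 - 2*s*Real.cos θ + s^2) (2*s*Real.sin θ) θ := by
    have h2' := (((Real.hasDerivAt_cos θ).const_mul (2*s)).const_sub 1).add_const (s^2)
    refine h2'.congr_deriv ?_
    ring
  have hS : HasDerivAt (fun θ => Real.sqrt (1 - 2*s*Real.cos θ + s^2))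
      ((2*s*Real.sin θ) / (2 * Real.sqrt (1 - 2*s*Real.cos θ + s^2))) θ := by
    have := (Real.hasDerivAt_sqrt hu.ne').comp θ hU
    refine this.congr_deriv ?_
    field_simp
  have hD := (Real.hasDerivAt_sin θ).div hS hsqpos.ne'
  refine hD.congr_deriv ?_
  have hs2 : Real.sin θ ^ 2 = 1 - Real.cos θ ^ 2 := Real.sin_sq θ
  set q := Real.sqrt (1 - 2*s*Real.cos θ + s^2) with hq
  rw [hsq]
  field_simp
  congr 1
  linear_combination Real.cos θ * hsq - s * hs2

lemma trb_hasDerivAt_s (θ : ℝ) {s : ℝ} (h1 : s < 1) (h2 : -1 < s) :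
    HasDerivAt (fun s => (Real.sqrt (1 - 2*s*Real.cos θ + s^2))⁻¹)
      ((Real.cos θ - s) / ((1 - 2*s*Real.cos θ + s^2) * Real.sqrt (1 - 2*s*Real.cos θ + s^2))) s := by
  have hu := trb_upos h1 h2 θ
  have hsq : Real.sqrt (1 - 2*s*Real.cos θ + s^2) ^ 2 = 1 - 2*s*Real.cos θ + s^2 :=
    Real.sq_sqrt hu.le
  have hsqpos : 0 < Real.sqrt (1 - 2*s*Real.cos θ + s^2) := Real.sqrt_pos.2 hu
  have hU : HasDerivAt (fun s => 1 - 2*s*Real.cos θ + s^2) (-2*Real.cos θ + 2*s) s := by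
    have h' := (((hasDerivAt_id s).const_mul (2*Real.cos θ)).const_sub 1).add
      ((hasDerivAt_id s).pow 2)
    convert h' using 1
    · rfl
    · rfl
    · ext x; simp; ring
    · simp
  have hS : HasDerivAt (fun s => Real.sqrt (1 - 2*s*Real.cos θ + s^2))
      ((-2*Real.cos θ + 2*s) / (2 * Real.sqrt (1 - 2*s*Real.cos θ + s^2))) s := by
    have := (Real.hasDerivAt_sqrt hu.ne').comp s hU
    refine this.congr_deriv ?_
    field_simp
  have hD := hS.inv hsqpos.ne'
  refine hD.congr_deriv ?_
  set q := Real.sqrt (1 - 2*s*Real.cos θ + s^2) with hq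
  rw [hsq]
  field_simp
  ring

section
variable {s : ℝ} (h0 : 0 ≤ s) (h1 : s < 1)

lemma trb_Q_abs_le (θ : ℝ) (h1 : s < 1) (h2 : -1 < s) :
    |Real.sin θ / Real.sqrt (1 - 2*s*Real.cos θ + s^2)| ≤ 1 := by
  have hu := trb_upos h1 h2 θ
  have hq : 0 < Real.sqrt (1 - 2*s*Real.cos θ + s^2) := Real.sqrt_pos.2 hu
  rw [abs_div, abs_of_pos hq, div_le_one hq]
  have h3 : |Real.sin θ| = Real.sqrt (Real.sin θ ^ 2) := (Real.sqrt_sq_eq_abs _).symm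
  rw [h3]
  apply Real.sqrt_le_sqrt
  nlinarith [Real.sin_sq_add_cos_sq θ, sq_nonneg (Real.cos θ - s)]

include h0 h1 in
lemma trb_cont {g : ℝ → ℝ} (hg : Continuous g) :
    Continuous (fun θ => g θ * (Real.cos θ - s) /
      ((1 - 2*s*Real.cos θ + s^2) * Real.sqrt (1 - 2*s*Real.cos θ + s^2))) := by
  apply hg.mul (by fun_prop) |>.div (by fun_prop)
  intro θ
  have hu := trb_upos h1 (by linarith) θ
  positivity

include h0 h1 in
lemma trb_E_intble (α β : ℝ) :
    IntervalIntegrable (fun θ => (Real.cos θ - s)^2 /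
      ((1 - 2*s*Real.cos θ + s^2) * Real.sqrt (1 - 2*s*Real.cos θ + s^2))) MeasureTheory.volume α β := by
  have := (trb_cont h0 h1 (g := fun θ => Real.cos θ - s)
    (by fun_prop)).intervalIntegrable (μ := MeasureTheory.volume) α β
  convert this using 2 with θ
  ring

include h0 h1 in
lemma trb_Qd_intble (α β : ℝ) :
    IntervalIntegrable (fun θ => (1 - s*Real.cos θ)*(Real.cos θ - s) /
      ((1 - 2*s*Real.cos θ + s^2) * Real.sqrt (1 - 2*s*Real.cos θ + s^2))) MeasureTheory.volume α β :=
  (trb_cont h0 h1 (g := fun θ => 1 - s*Real.cos θ) (by fun_prop)).intervalIntegrable α β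

include h0 h1 in
lemma trb_Qd_int (α β : ℝ) :
    ∫ θ in α..β, (1 - s*Real.cos θ)*(Real.cos θ - s) /
      ((1 - 2*s*Real.cos θ + s^2) * Real.sqrt (1 - 2*s*Real.cos θ + s^2)) =
      Real.sin β / Real.sqrt (1 - 2*s*Real.cos β + s^2)
        - Real.sin α / Real.sqrt (1 - 2*s*Real.cos α + s^2) :=
  integral_eq_sub_of_hasDerivAt (fun θ _ => trb_hasDerivAt_Q h1 (by linarith) θ)
    (trb_Qd_intble h0 h1 α β)

include h0 h1 in
lemma trb_inner :
    ∫ θ in (0:ℝ)..(2*π), (Real.cos θ - s) /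
        ((1 - 2*s*Real.cos θ + s^2) * Real.sqrt (1 - 2*s*Real.cos θ + s^2))
      ≤ 4*s/(1-s^2) := by
  have h2 : (-1:ℝ) < s := by linarith
  have hs2 : (0:ℝ) < 1 - s^2 := by nlinarith
  have hdenpos : ∀ θ, 0 < (1 - 2*s*Real.cos θ + s^2) * Real.sqrt (1 - 2*s*Real.cos θ + s^2) := by
    intro θ; have := trb_upos h1 h2 θ; positivity
  have hident : ∀ θ ∈ Set.uIcc (0:ℝ) (2*π), (Real.cos θ - s) /
      ((1 - 2*s*Real.cos θ + s^2) * Real.sqrt (1 - 2*s*Real.cos θ + s^2))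
      = (1/(1-s^2)) * ((1 - s*Real.cos θ)*(Real.cos θ - s) /
          ((1 - 2*s*Real.cos θ + s^2) * Real.sqrt (1 - 2*s*Real.cos θ + s^2))
        + s * ((Real.cos θ - s)^2 /
          ((1 - 2*s*Real.cos θ + s^2) * Real.sqrt (1 - 2*s*Real.cos θ + s^2)))) := by
    intro θ _
    have hd := (hdenpos θ).ne'
    field_simp
    ring
  rw [intervalIntegral.integral_congr hident]
  have hQdi := trb_Qd_intble h0 h1
  have hEi := trb_E_intble h0 h1
  rw [intervalIntegral.integral_const_mul,
      intervalIntegral.integral_add (hQdi 0 (2*π)) ((hEi 0 (2*π)).const_mul s),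
      intervalIntegral.integral_const_mul]
  rw [trb_Qd_int h0 h1]
  simp only [Real.sin_two_pi, Real.sin_zero, zero_div, sub_zero]
  -- now: 1/(1-s²) * (s * ∫ E) ≤ 4s/(1-s²)
  have hEbound : ∫ θ in (0:ℝ)..(2*π), (Real.cos θ - s)^2 /
      ((1 - 2*s*Real.cos θ + s^2) * Real.sqrt (1 - 2*s*Real.cos θ + s^2)) ≤ 4 := by
    set θ₀ := Real.arccos s with hθ₀
    have hθ₀0 : 0 ≤ θ₀ := Real.arccos_nonneg s
    have hθ₀pi : θ₀ ≤ π := Real.arccos_le_pi s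
    have hπ : 0 < π := Real.pi_pos
    have hcosθ₀ : Real.cos θ₀ = s := Real.cos_arccos (by linarith) (by linarith)
    have habs := fun θ => trb_Q_abs_le θ h1 h2
    have hsplit : ∫ θ in (0:ℝ)..(2*π), (Real.cos θ - s)^2 /
        ((1 - 2*s*Real.cos θ + s^2) * Real.sqrt (1 - 2*s*Real.cos θ + s^2))
        = (∫ θ in (0:ℝ)..θ₀, (Real.cos θ - s)^2 /
            ((1 - 2*s*Real.cos θ + s^2) * Real.sqrt (1 - 2*s*Real.cos θ + s^2)))
        + (∫ θ in θ₀..(2*π - θ₀), (Real.cos θ - s)^2 /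
            ((1 - 2*s*Real.cos θ + s^2) * Real.sqrt (1 - 2*s*Real.cos θ + s^2)))
        + (∫ θ in (2*π - θ₀)..(2*π), (Real.cos θ - s)^2 /
            ((1 - 2*s*Real.cos θ + s^2) * Real.sqrt (1 - 2*s*Real.cos θ + s^2))) := by
      rw [integral_add_adjacent_intervals (hEi 0 θ₀) (hEi θ₀ (2*π - θ₀)),
          integral_add_adjacent_intervals (hEi 0 (2*π - θ₀)) (hEi (2*π - θ₀) (2*π))]
    have hcos_ge : ∀ θ, 0 ≤ θ → θ ≤ θ₀ → s ≤ Real.cos θ := by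
      intro θ hθa hθb
      rw [← hcosθ₀]
      exact Real.cos_le_cos_of_nonneg_of_le_pi hθa hθ₀pi hθb
    have hcos_le : ∀ θ, θ₀ ≤ θ → θ ≤ 2*π - θ₀ → Real.cos θ ≤ s := by
      intro θ hθa hθb
      rcases le_or_gt θ π with hθπ | hθπ
      · rw [← hcosθ₀]
        exact Real.cos_le_cos_of_nonneg_of_le_pi hθ₀0 hθπ hθa
      · rw [← Real.cos_two_pi_sub, ← hcosθ₀]
        exact Real.cos_le_cos_of_nonneg_of_le_pi hθ₀0 (by linarith) (by linarith)
    have hEQd : ∀ θ, s ≤ Real.cos θ → (Real.cos θ - s)^2 /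
        ((1 - 2*s*Real.cos θ + s^2) * Real.sqrt (1 - 2*s*Real.cos θ + s^2))
        ≤ (1 - s*Real.cos θ)*(Real.cos θ - s) /
        ((1 - 2*s*Real.cos θ + s^2) * Real.sqrt (1 - 2*s*Real.cos θ + s^2)) := by
      intro θ hc
      have h1c : Real.cos θ ≤ 1 := Real.cos_le_one θ
      gcongr
      · exact (hdenpos θ).le
      · nlinarith [mul_nonneg (sub_nonneg.2 hc)
          (mul_nonneg (sub_nonneg.2 h1c) (by linarith : (0:ℝ) ≤ 1+s))]
    have hEQd' : ∀ θ, Real.cos θ ≤ s → (Real.cos θ - s)^2 /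
        ((1 - 2*s*Real.cos θ + s^2) * Real.sqrt (1 - 2*s*Real.cos θ + s^2))
        ≤ -((1 - s*Real.cos θ)*(Real.cos θ - s) /
        ((1 - 2*s*Real.cos θ + s^2) * Real.sqrt (1 - 2*s*Real.cos θ + s^2))) := by
      intro θ hc
      have h1c : -1 ≤ Real.cos θ := Real.neg_one_le_cos θ
      rw [← neg_div]
      gcongr
      · exact (hdenpos θ).le
      · nlinarith [mul_nonneg (sub_nonneg.2 hc)
          (mul_nonneg (by linarith : (0:ℝ) ≤ 1 + Real.cos θ) (by linarith : (0:ℝ) ≤ 1-s))]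
    have hseg1 : (∫ θ in (0:ℝ)..θ₀, (Real.cos θ - s)^2 /
        ((1 - 2*s*Real.cos θ + s^2) * Real.sqrt (1 - 2*s*Real.cos θ + s^2))) ≤ 1 := by
      have hm := intervalIntegral.integral_mono_on hθ₀0 (hEi 0 θ₀) (hQdi 0 θ₀)
        (fun θ hθ => hEQd θ (hcos_ge θ hθ.1 hθ.2))
      rw [trb_Qd_int h0 h1] at hm
      refine hm.trans ?_
      simp only [Real.sin_zero, zero_div, sub_zero]
      exact (abs_le.1 (habs θ₀)).2
    have hseg2 : (∫ θ in θ₀..(2*π - θ₀), (Real.cos θ - s)^2 /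
        ((1 - 2*s*Real.cos θ + s^2) * Real.sqrt (1 - 2*s*Real.cos θ + s^2))) ≤ 2 := by
      have hQdineg : IntervalIntegrable (fun θ => -((1 - s*Real.cos θ)*(Real.cos θ - s) /
          ((1 - 2*s*Real.cos θ + s^2) * Real.sqrt (1 - 2*s*Real.cos θ + s^2))))
          MeasureTheory.volume θ₀ (2*π - θ₀) := (hQdi θ₀ (2*π - θ₀)).neg
      have hm := intervalIntegral.integral_mono_on (by linarith : θ₀ ≤ 2*π - θ₀)
        (hEi θ₀ (2*π - θ₀)) hQdineg
        (fun θ hθ => hEQd' θ (hcos_le θ hθ.1 hθ.2))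
      have hneg := intervalIntegral.integral_neg (μ := MeasureTheory.volume) (a := θ₀)
        (b := 2*π - θ₀) (f := fun θ => (1 - s*Real.cos θ)*(Real.cos θ - s) /
          ((1 - 2*s*Real.cos θ + s^2) * Real.sqrt (1 - 2*s*Real.cos θ + s^2)))
      rw [hneg, trb_Qd_int h0 h1] at hm
      refine hm.trans ?_
      have ha := (abs_le.1 (habs θ₀)).2
      have hb := (abs_le.1 (habs (2*π - θ₀))).1
      linarith
    have hseg3 : (∫ θ in (2*π - θ₀)..(2*π), (Real.cos θ - s)^2 /
        ((1 - 2*s*Real.cos θ + s^2) * Real.sqrt (1 - 2*s*Real.cos θ + s^2))) ≤ 1 := by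
      have hcg : ∀ θ, 2*π - θ₀ ≤ θ → θ ≤ 2*π → s ≤ Real.cos θ := by
        intro θ hθa hθb
        rw [← Real.cos_two_pi_sub, ← hcosθ₀]
        exact Real.cos_le_cos_of_nonneg_of_le_pi (by linarith) hθ₀pi (by linarith)
      have hm := intervalIntegral.integral_mono_on (by linarith : 2*π - θ₀ ≤ 2*π)
        (hEi (2*π - θ₀) (2*π)) (hQdi (2*π - θ₀) (2*π))
        (fun θ hθ => hEQd θ (hcg θ hθ.1 hθ.2))
      rw [trb_Qd_int h0 h1] at hm
      refine hm.trans ?_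
      have hb := (abs_le.1 (habs (2*π - θ₀))).1
      simp only [Real.sin_two_pi, zero_div]
      linarith
    linarith [hsplit, hseg1, hseg2, hseg3]
  have hTnn : s * (∫ θ in (0:ℝ)..(2*π), (Real.cos θ - s)^2 /
      ((1 - 2*s*Real.cos θ + s^2) * Real.sqrt (1 - 2*s*Real.cos θ + s^2))) ≤ 4 * s := by
    nlinarith [hEbound]
  calc 1/(1-s^2) * (0 + s * ∫ θ in (0:ℝ)..(2*π), (Real.cos θ - s)^2 /
      ((1 - 2*s*Real.cos θ + s^2) * Real.sqrt (1 - 2*s*Real.cos θ + s^2)))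
      ≤ 1/(1-s^2) * (4*s) := by
        rw [zero_add]
        exact mul_le_mul_of_nonneg_left hTnn (by positivity)
    _ = 4*s/(1-s^2) := by ring
end

lemma trb_key {a : ℝ} (h0 : 0 ≤ a) (h1 : a < 1) :
    ∫ θ in (0:ℝ)..(2*π), (Real.sqrt (1 - 2*a*Real.cos θ + a^2))⁻¹
      ≤ 2*π + 2*Real.log (1/(1-a^2)) := by
  have hπ : 0 < π := Real.pi_pos
  set F : ℝ → ℝ → ℝ := fun θ s => (Real.cos θ - s) /
      ((1 - 2*s*Real.cos θ + s^2) * Real.sqrt (1 - 2*s*Real.cos θ + s^2)) with hF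
  -- continuity of uncurried F on the strip
  have hFcont : ContinuousOn (Function.uncurry F) (Set.univ ×ˢ Set.Icc (0:ℝ) a) := by
    apply ContinuousOn.div
    · exact (Continuous.continuousOn (by fun_prop))
    · exact (Continuous.continuousOn (by fun_prop))
    · rintro ⟨θ, s⟩ ⟨-, hs1, hs2⟩
      have := trb_upos (lt_of_le_of_lt hs2 h1) (by linarith) θ
      positivity
  have hFint : IntegrableOn (Function.uncurry F) (Set.Ioc (0:ℝ) (2*π) ×ˢ Set.Ioc (0:ℝ) a) := by
    have hK : IsCompact (Set.Icc (0:ℝ) (2*π) ×ˢ Set.Icc (0:ℝ) a) :=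
      isCompact_Icc.prod isCompact_Icc
    have := ContinuousOn.integrableOn_compact (μ := volume) hK (hFcont.mono (by
      apply Set.prod_mono (fun x _ => Set.mem_univ x) subset_rfl))
    exact this.mono_set (Set.prod_mono Set.Ioc_subset_Icc_self Set.Ioc_subset_Icc_self)
  have hIunc : Integrable (Function.uncurry F)
      ((volume.restrict (Set.Ioc (0:ℝ) (2*π))).prod (volume.restrict (Set.Ioc (0:ℝ) a))) := by
    rw [Measure.prod_restrict]
    rwa [← Measure.volume_eq_prod]
  -- FTC in s, pointwise in θ
  have hFTC : ∀ θ : ℝ, (Real.sqrt (1 - 2*a*Real.cos θ + a^2))⁻¹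
      = 1 + ∫ s in (0:ℝ)..a, F θ s := by
    intro θ
    have hint : IntervalIntegrable (fun s => F θ s) volume 0 a := by
      apply ContinuousOn.intervalIntegrable
      apply ContinuousOn.div
      · exact (Continuous.continuousOn (by fun_prop))
      · exact (Continuous.continuousOn (by fun_prop))
      · intro s hs
        rw [Set.uIcc_of_le h0] at hs
        have := trb_upos (lt_of_le_of_lt hs.2 h1) (by linarith [hs.1]) θ
        positivity
    have := integral_eq_sub_of_hasDerivAt (f := fun s => (Real.sqrt (1 - 2*s*Real.cos θ + s^2))⁻¹)
      (f' := fun s => F θ s) (a := 0) (b := a) (fun s hs => by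
        rw [Set.uIcc_of_le h0] at hs
        exact trb_hasDerivAt_s θ (lt_of_le_of_lt hs.2 h1) (by linarith [hs.1])) hint
    rw [this]
    norm_num
  -- rewrite the integrand
  have hsplit : ∫ θ in (0:ℝ)..(2*π), (Real.sqrt (1 - 2*a*Real.cos θ + a^2))⁻¹
      = 2*π + ∫ θ in (0:ℝ)..(2*π), ∫ s in (0:ℝ)..a, F θ s := by
    rw [intervalIntegral.integral_congr (g := fun θ => 1 + ∫ s in (0:ℝ)..a, F θ s)
      (fun θ _ => hFTC θ)]
    have h1i : IntervalIntegrable (fun _ : ℝ => (1:ℝ)) volume 0 (2*π) :=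
      intervalIntegrable_const
    have heq : (fun θ => ∫ s in (0:ℝ)..a, F θ s)
        = fun θ => (Real.sqrt (1 - 2*a*Real.cos θ + a^2))⁻¹ - 1 :=
      funext fun θ => by rw [hFTC θ]; ring
    have h2i : IntervalIntegrable (fun θ => ∫ s in (0:ℝ)..a, F θ s) volume 0 (2*π) := by
      rw [heq]
      apply Continuous.intervalIntegrable
      exact ((Real.continuous_sqrt.comp (by fun_prop)).inv₀
        (fun θ => (Real.sqrt_pos.2 (trb_upos h1 (by linarith) θ)).ne')).sub continuous_const
    rw [intervalIntegral.integral_add h1i h2i]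
    norm_num
  rw [hsplit]
  have h2π : (0:ℝ) ≤ 2*π := by positivity
  have hswap : ∫ θ in (0:ℝ)..(2*π), ∫ s in (0:ℝ)..a, F θ s
      = ∫ s in Set.Ioc (0:ℝ) a, ∫ θ in Set.Ioc (0:ℝ) (2*π), F θ s := by
    rw [intervalIntegral.integral_of_le h2π]
    simp_rw [intervalIntegral.integral_of_le h0]
    exact MeasureTheory.integral_integral_swap hIunc
  rw [hswap]
  have hmono : ∫ s in Set.Ioc (0:ℝ) a, ∫ θ in Set.Ioc (0:ℝ) (2*π), F θ s
      ≤ ∫ s in Set.Ioc (0:ℝ) a, 4*s/(1-s^2) := by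
    apply MeasureTheory.setIntegral_mono_on
    · exact hIunc.integral_prod_right
    · apply IntegrableOn.mono_set ?_ Set.Ioc_subset_Icc_self
      apply ContinuousOn.integrableOn_compact isCompact_Icc
      apply ContinuousOn.div (Continuous.continuousOn (by fun_prop))
        (Continuous.continuousOn (by fun_prop))
      intro s hs
      have : s < 1 := lt_of_le_of_lt hs.2 h1
      have : 0 < 1 - s^2 := by nlinarith [hs.1]
      linarith
    · exact measurableSet_Ioc
    · intro s hs
      rw [← intervalIntegral.integral_of_le h2π]
      exact trb_inner hs.1.le (lt_of_le_of_lt hs.2 h1)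
  have hval : ∫ s in Set.Ioc (0:ℝ) a, 4*s/(1-s^2) = 2*Real.log (1/(1-a^2)) := by
    rw [← intervalIntegral.integral_of_le h0]
    have hderiv : ∀ s ∈ Set.uIcc (0:ℝ) a, HasDerivAt (fun s => -2*Real.log (1-s^2))
        (4*s/(1-s^2)) s := by
      intro s hs
      rw [Set.uIcc_of_le h0] at hs
      have hs1 : s < 1 := lt_of_le_of_lt hs.2 h1
      have hne : (1:ℝ) - s^2 ≠ 0 := by nlinarith [hs.1]
      have hinner : HasDerivAt (fun s : ℝ => 1 - s^2) (-(2*s)) s := by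
        simpa using ((hasDerivAt_pow 2 s).const_sub 1)
      have hlog := (Real.hasDerivAt_log hne).comp s hinner
      have := hlog.const_mul (-2)
      refine this.congr_deriv ?_
      field_simp
      ring
    have hint : IntervalIntegrable (fun s => 4*s/(1-s^2)) volume 0 a := by
      apply ContinuousOn.intervalIntegrable
      apply ContinuousOn.div (Continuous.continuousOn (by fun_prop))
        (Continuous.continuousOn (by fun_prop))
      intro s hs
      rw [Set.uIcc_of_le h0] at hs
      have : s < 1 := lt_of_le_of_lt hs.2 h1
      have : 0 < 1 - s^2 := by nlinarith [hs.1]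
      linarith
    rw [integral_eq_sub_of_hasDerivAt hderiv hint]
    rw [one_div, Real.log_inv]
    simp [Real.log_one]
  linarith [hmono, hval]

lemma trb_norm_aux (ρ t ψ : ℝ) :
    ‖(ρ:ℂ) * Complex.exp ((ψ:ℝ) * I) - (t:ℂ)‖
      = Real.sqrt ((ρ * Real.cos ψ - t)^2 + (ρ * Real.sin ψ)^2) := by
  rw [Complex.norm_def, Complex.normSq_apply]
  congr 1
  simp [Complex.exp_ofReal_mul_I_re, Complex.exp_ofReal_mul_I_im]
  ring

lemma trb_norm_circle (z : ℂ) {ρ : ℝ} (hρ : 0 < ρ) (θ : ℝ) :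
    ‖circleMap 0 ρ θ - z‖
      = ρ * Real.sqrt (1 - 2*(‖z‖/ρ)*Real.cos (θ - Complex.arg z) + (‖z‖/ρ)^2) := by
  set t := ‖z‖ with ht
  set φ := Complex.arg z with hφ
  have htnn : 0 ≤ t := norm_nonneg z
  have hz : z = (t : ℂ) * Complex.exp (φ * I) := by
    rw [ht, hφ]
    exact (Complex.norm_mul_exp_arg_mul_I z).symm
  have h1 : circleMap 0 ρ θ - z
      = Complex.exp (φ * I) * ((ρ:ℂ) * Complex.exp ((θ - φ : ℝ) * I) - (t:ℂ)) := by
    rw [circleMap, hz, zero_add, mul_sub]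
    congr 1
    · rw [mul_left_comm, ← Complex.exp_add]
      congr 2
      push_cast
      ring
    · ring
  rw [h1, norm_mul, Complex.norm_exp_ofReal_mul_I, one_mul]
  rw [trb_norm_aux]
  rw [show (ρ * Real.cos (θ - φ) - t)^2 + (ρ * Real.sin (θ - φ))^2
      = ρ^2 * (1 - 2*(t/ρ)*Real.cos (θ - φ) + (t/ρ)^2) by
    have := Real.sin_sq_add_cos_sq (θ - φ)
    field_simp
    linear_combination ρ^2 * this]
  rw [Real.sqrt_mul (by positivity) _, Real.sqrt_sq hρ.le]

lemma trb_circle_integral_bound {z : ℂ} {ρ : ℝ} (hρ : 0 < ρ) (hz : ‖z‖ < ρ) :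
    ∫ θ in (0:ℝ)..(2*π), ‖circleMap 0 ρ θ - z‖⁻¹
      ≤ ρ⁻¹ * (2*π + 2*Real.log (1/(1-(‖z‖/ρ)^2))) := by
  set a := ‖z‖/ρ with ha
  have ha0 : 0 ≤ a := by positivity
  have ha1 : a < 1 := by rw [ha, div_lt_one hρ]; exact hz
  set φ := Complex.arg z with hφ
  have h1 : ∀ θ, ‖circleMap 0 ρ θ - z‖⁻¹
      = ρ⁻¹ * (Real.sqrt (1 - 2*a*Real.cos (θ - φ) + a^2))⁻¹ := by
    intro θ
    rw [trb_norm_circle z hρ θ, mul_inv]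
  simp_rw [h1]
  rw [intervalIntegral.integral_const_mul]
  apply mul_le_mul_of_nonneg_left ?_ (by positivity)
  have h2 : ∫ θ in (0:ℝ)..(2*π), (Real.sqrt (1 - 2*a*Real.cos (θ - φ) + a^2))⁻¹
      = ∫ θ in (0:ℝ)..(2*π), (Real.sqrt (1 - 2*a*Real.cos θ + a^2))⁻¹ := by
    rw [intervalIntegral.integral_comp_sub_right
      (fun θ => (Real.sqrt (1 - 2*a*Real.cos θ + a^2))⁻¹) φ]
    have hper : Function.Periodic (fun θ => (Real.sqrt (1 - 2*a*Real.cos θ + a^2))⁻¹) (2*π) := by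
      intro x; simp [Real.cos_add_two_pi]
    rw [show (0:ℝ) - φ = -φ by ring, show 2*π - φ = -φ + 2*π by ring,
      hper.intervalIntegral_add_eq (-φ) 0]
    norm_num
  rw [h2]
  exact trb_key ha0 ha1

end TrbReal

lemma trb_kernel (k : ℕ) {z w : ℂ} (hw : w ≠ 0) (hzw : w ≠ z) :
    (w - z)⁻¹ - ∑ j ∈ Finset.range (k+1), z^j * (((1:ℂ)/w)^j * w⁻¹)
      = (z/w)^(k+1) * (w - z)⁻¹ := by
  have hne : w - z ≠ 0 := sub_ne_zero.2 hzw
  have hq : z/w ≠ 1 := by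
    intro h
    rw [div_eq_one_iff_eq hw] at h
    exact hzw h.symm
  have hsum : ∑ j ∈ Finset.range (k+1), z^j * (((1:ℂ)/w)^j * w⁻¹)
      = (∑ j ∈ Finset.range (k+1), (z/w)^j) * w⁻¹ := by
    rw [Finset.sum_mul]
    refine Finset.sum_congr rfl fun j _ => ?_
    rw [div_pow, div_pow, one_pow]
    field_simp
  rw [hsum, geom_sum_eq hq (k+1)]
  have hq' : z/w - 1 ≠ 0 := sub_ne_zero.2 hq
  have hzw2 : z - w ≠ 0 := fun h => hzw (sub_eq_zero.1 h).symm
  field_simp [hne, hzw2, hw]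
  ring

open Metric intervalIntegral in
theorem taylor_remainder_bound (f : ℂ → ℂ)
    (hf : DifferentiableOn ℂ f (Metric.ball 0 1)) (M : ℝ)
    (hM : ∀ w ∈ Metric.ball (0 : ℂ) 1, ‖f w‖ ≤ M) (k : ℕ) (z : ℂ) (hz : ‖z‖ < 1) :
    ‖f z - ∑ j ∈ Finset.range (k + 1), (iteratedDeriv j f 0 / (j.factorial : ℂ)) * z ^ j‖ ≤
      ‖z‖ ^ (k + 1) * (1 + (1 / Real.pi) * Real.log (1 / (1 - ‖z‖ ^ 2))) * M := by
  have hπ : (0:ℝ) < Real.pi := Real.pi_pos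
  set t := ‖z‖ with ht
  have ht0 : 0 ≤ t := norm_nonneg z
  have hmain : ∀ ρ : ℝ, t < ρ → ρ < 1 →
      ‖f z - ∑ j ∈ Finset.range (k + 1), (iteratedDeriv j f 0 / (j.factorial : ℂ)) * z ^ j‖ ≤
        (t/ρ) ^ (k + 1) * (1 + (1 / Real.pi) * Real.log (1 / (1 - (t/ρ) ^ 2))) * M := by
    intro ρ hρ1 hρ2
    have hρ0 : 0 < ρ := lt_of_le_of_lt ht0 hρ1
    have hM0 : 0 ≤ M := le_trans (norm_nonneg _) (hM 0 (by simp))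
    set R : NNReal := ⟨ρ, hρ0.le⟩ with hR
    have hsub : closedBall (0:ℂ) ρ ⊆ ball 0 1 := closedBall_subset_ball hρ2
    have hdc : DiffContOnCl ℂ f (ball 0 ρ) := by
      apply DifferentiableOn.diffContOnCl
      rw [closure_ball (0:ℂ) hρ0.ne']
      exact hf.mono hsub
    have hdcR : DiffContOnCl ℂ f (ball 0 (R:ℝ)) := hdc
    have hps : HasFPowerSeriesOnBall f (cauchyPowerSeries f 0 (R:ℝ)) 0 R :=
      hdcR.hasFPowerSeriesOnBall (by exact_mod_cast hρ0)
    set p := cauchyPowerSeries f 0 ρ with hp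
    have hcoeff : ∀ j : ℕ, iteratedDeriv j f 0 / (j.factorial : ℂ) = p.coeff j := by
      intro j
      have h := hps.factorial_smul (1:ℂ) j
      rw [nsmul_eq_mul] at h
      rw [iteratedDeriv_eq_iteratedFDeriv]
      rw [← h]
      rw [FormalMultilinearSeries.coeff]
      field_simp [Nat.cast_ne_zero.2 (Nat.factorial_ne_zero j)]
      rfl
    have hzmem : z ∈ ball (0:ℂ) ρ := by
      rw [mem_ball_zero_iff]; exact hρ1
    have hfz : f z = (2*Real.pi*I : ℂ)⁻¹ • ∮ w in C(0, ρ), (w - z)⁻¹ • f w :=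
      (hdc.two_pi_i_inv_smul_circleIntegral_sub_inv_smul hzmem).symm
    have hco : ∀ j : ℕ, p.coeff j
        = (2*Real.pi*I : ℂ)⁻¹ • ∮ w in C(0, ρ), ((1:ℂ)/(w - 0))^j • (w - 0)⁻¹ • f w := by
      intro j
      rw [hp, FormalMultilinearSeries.coeff]
      exact cauchyPowerSeries_apply f 0 ρ j 1
    set γ : ℝ → ℂ := circleMap 0 ρ with hγ
    have hγcont : Continuous γ := continuous_circleMap 0 ρ
    have hγnorm : ∀ θ, ‖γ θ‖ = ρ := by
      intro θ
      rw [hγ, norm_circleMap_zero, abs_of_pos hρ0]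
    have hγ0 : ∀ θ, γ θ ≠ 0 := by
      intro θ h
      have := hγnorm θ
      rw [h, norm_zero] at this
      linarith
    have hγz : ∀ θ, γ θ ≠ z := by
      intro θ h
      have := hγnorm θ
      rw [h, ← ht] at this
      linarith
    have hγball : ∀ θ, γ θ ∈ ball (0:ℂ) 1 := fun θ => mem_ball_zero_iff.2 (by
      rw [hγnorm]; exact hρ2)
    have hfγ : Continuous fun θ => f (γ θ) :=
      ContinuousOn.comp_continuous hf.continuousOn hγcont hγball
    have hI1 : (∮ w in C(0, ρ), (w - z)⁻¹ • f w)
        = ∫ θ in (0:ℝ)..(2*Real.pi), (γ θ * I) * ((γ θ - z)⁻¹ * f (γ θ)) := by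
      simp only [circleIntegral, deriv_circleMap, smul_eq_mul, hγ]
    have hI2 : ∀ j : ℕ, (∮ w in C(0, ρ), ((1:ℂ)/(w - 0))^j • (w - 0)⁻¹ • f w)
        = ∫ θ in (0:ℝ)..(2*Real.pi), (γ θ * I) * (((1:ℂ)/γ θ)^j * ((γ θ)⁻¹ * f (γ θ))) := by
      intro j
      simp only [circleIntegral, deriv_circleMap, smul_eq_mul, sub_zero, hγ]
    have hcont1 : Continuous fun θ => (γ θ * I) * ((γ θ - z)⁻¹ * f (γ θ)) := by
      apply (hγcont.mul continuous_const).mul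
      apply Continuous.mul ?_ hfγ
      exact Continuous.inv₀ (hγcont.sub continuous_const) (fun θ => sub_ne_zero.2 (hγz θ))
    have hcont2 : ∀ j : ℕ, Continuous fun θ =>
        z^j * ((γ θ * I) * (((1:ℂ)/γ θ)^j * ((γ θ)⁻¹ * f (γ θ)))) := by
      intro j
      apply Continuous.mul continuous_const
      apply (hγcont.mul continuous_const).mul
      apply Continuous.mul
      · exact (Continuous.div continuous_const hγcont hγ0).pow j
      · exact (hγcont.inv₀ hγ0).mul hfγ
    have hcontK : Continuous fun θ => (γ θ * I) * ((z/γ θ)^(k+1) * ((γ θ - z)⁻¹ * f (γ θ))) := by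
      apply (hγcont.mul continuous_const).mul
      apply Continuous.mul
      · exact (Continuous.div continuous_const hγcont hγ0).pow (k+1)
      · exact (Continuous.inv₀ (hγcont.sub continuous_const)
          (fun θ => sub_ne_zero.2 (hγz θ))).mul hfγ
    have hsum2 : ∑ j ∈ Finset.range (k+1), p.coeff j * z^j
        = (2*Real.pi*I : ℂ)⁻¹ * ∫ θ in (0:ℝ)..(2*Real.pi), ∑ j ∈ Finset.range (k+1),
            z^j * ((γ θ * I) * (((1:ℂ)/γ θ)^j * ((γ θ)⁻¹ * f (γ θ)))) := by
      rw [intervalIntegral.integral_finset_sum (fun j _ => ((hcont2 j)).intervalIntegrable _ _)]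
      rw [Finset.mul_sum]
      refine Finset.sum_congr rfl fun j _ => ?_
      rw [hco j, hI2 j, smul_eq_mul, intervalIntegral.integral_const_mul]
      ring
    have hrem : f z - ∑ j ∈ Finset.range (k+1), p.coeff j * z^j
        = (2*Real.pi*I : ℂ)⁻¹ * ∫ θ in (0:ℝ)..(2*Real.pi),
            (γ θ * I) * ((z/γ θ)^(k+1) * ((γ θ - z)⁻¹ * f (γ θ))) := by
      rw [hfz, hI1, hsum2, smul_eq_mul, ← mul_sub]
      congr 1
      have hintsum : IntervalIntegrable (fun θ => ∑ j ∈ Finset.range (k+1),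
          z^j * ((γ θ * I) * (((1:ℂ)/γ θ)^j * ((γ θ)⁻¹ * f (γ θ)))))
          MeasureTheory.volume 0 (2*Real.pi) :=
        (continuous_finset_sum _ (fun j _ => hcont2 j)).intervalIntegrable _ _
      rw [← intervalIntegral.integral_sub (hcont1.intervalIntegrable _ _) hintsum]
      apply intervalIntegral.integral_congr
      intro θ _
      dsimp only
      have hk := trb_kernel k (hγ0 θ) (hγz θ)
      have hs : ∑ j ∈ Finset.range (k+1), z^j * ((γ θ * I) * (((1:ℂ)/γ θ)^j * ((γ θ)⁻¹ * f (γ θ))))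
          = (γ θ * I * f (γ θ)) * ∑ j ∈ Finset.range (k+1), z^j * (((1:ℂ)/γ θ)^j * (γ θ)⁻¹) := by
        rw [Finset.mul_sum]
        exact Finset.sum_congr rfl fun j _ => by ring
      rw [hs]
      calc (γ θ * I) * ((γ θ - z)⁻¹ * f (γ θ))
          - (γ θ * I * f (γ θ)) * ∑ j ∈ Finset.range (k+1), z^j * (((1:ℂ)/γ θ)^j * (γ θ)⁻¹)
          = (γ θ * I * f (γ θ)) * ((γ θ - z)⁻¹
              - ∑ j ∈ Finset.range (k+1), z^j * (((1:ℂ)/γ θ)^j * (γ θ)⁻¹)) := by ring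
        _ = (γ θ * I * f (γ θ)) * ((z/γ θ)^(k+1) * (γ θ - z)⁻¹) := by rw [hk]
        _ = (γ θ * I) * ((z/γ θ)^(k+1) * ((γ θ - z)⁻¹ * f (γ θ))) := by ring
    have hsg : ∑ j ∈ Finset.range (k+1), (iteratedDeriv j f 0 / (j.factorial : ℂ)) * z^j
        = ∑ j ∈ Finset.range (k+1), p.coeff j * z^j :=
      Finset.sum_congr rfl fun j _ => by rw [hcoeff j]
    rw [hsg, hrem, norm_mul]
    have hnorm2πI : ‖(2*Real.pi*I : ℂ)⁻¹‖ = (2*Real.pi)⁻¹ := by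
      simp [norm_inv, map_mul,
        abs_of_pos hπ]
    rw [hnorm2πI]
    -- bound the integral
    have hgcont : Continuous fun θ => (ρ * ((t/ρ)^(k+1) * M)) * ‖γ θ - z‖⁻¹ := by
      apply Continuous.mul continuous_const
      exact Continuous.inv₀ ((hγcont.sub continuous_const).norm)
        (fun θ => norm_ne_zero_iff.2 (sub_ne_zero.2 (hγz θ)))
    have hptwise : ∀ θ : ℝ, ‖(γ θ * I) * ((z/γ θ)^(k+1) * ((γ θ - z)⁻¹ * f (γ θ)))‖
        ≤ (ρ * ((t/ρ)^(k+1) * M)) * ‖γ θ - z‖⁻¹ := by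
      intro θ
      have he : ‖(γ θ * I) * ((z/γ θ)^(k+1) * ((γ θ - z)⁻¹ * f (γ θ)))‖
          = (ρ * ((t/ρ)^(k+1) * ‖γ θ - z‖⁻¹)) * ‖f (γ θ)‖ := by
        simp only [norm_mul, norm_pow, norm_div, norm_inv, Complex.norm_I, hγnorm, ← ht]
        ring
      rw [he]
      calc (ρ * ((t/ρ)^(k+1) * ‖γ θ - z‖⁻¹)) * ‖f (γ θ)‖
          ≤ (ρ * ((t/ρ)^(k+1) * ‖γ θ - z‖⁻¹)) * M := by
            apply mul_le_mul_of_nonneg_left (hM _ (hγball θ)) (by positivity)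
        _ = (ρ * ((t/ρ)^(k+1) * M)) * ‖γ θ - z‖⁻¹ := by ring
    have hbd := intervalIntegral.norm_integral_le_of_norm_le
      (f := fun θ => (γ θ * I) * ((z/γ θ)^(k+1) * ((γ θ - z)⁻¹ * f (γ θ))))
      (g := fun θ => (ρ * ((t/ρ)^(k+1) * M)) * ‖γ θ - z‖⁻¹)
      (a := 0) (b := 2*Real.pi) (μ := MeasureTheory.volume)
      (by positivity) (MeasureTheory.ae_of_all _ (fun θ _ => hptwise θ)) (hgcont.intervalIntegrable _ _)
    have hgnn : 0 ≤ ∫ θ in (0:ℝ)..(2*Real.pi), (ρ * ((t/ρ)^(k+1) * M)) * ‖γ θ - z‖⁻¹ := by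
      apply intervalIntegral.integral_nonneg (by positivity)
      intro θ _
      positivity
    have hgval : ∫ θ in (0:ℝ)..(2*Real.pi), (ρ * ((t/ρ)^(k+1) * M)) * ‖γ θ - z‖⁻¹
        ≤ (ρ * ((t/ρ)^(k+1) * M)) * (ρ⁻¹ * (2*Real.pi + 2*Real.log (1/(1-(t/ρ)^2)))) := by
      rw [intervalIntegral.integral_const_mul]
      exact mul_le_mul_of_nonneg_left (trb_circle_integral_bound hρ0 hρ1) (by positivity)
    calc (2*Real.pi)⁻¹ * ‖∫ θ in (0:ℝ)..(2*Real.pi),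
            (γ θ * I) * ((z/γ θ)^(k+1) * ((γ θ - z)⁻¹ * f (γ θ)))‖
        ≤ (2*Real.pi)⁻¹ * ((ρ * ((t/ρ)^(k+1) * M)) * (ρ⁻¹ * (2*Real.pi
            + 2*Real.log (1/(1-(t/ρ)^2))))) := by
          apply mul_le_mul_of_nonneg_left (hbd.trans hgval) (by positivity)
      _ = (t/ρ) ^ (k + 1) * (1 + (1 / Real.pi) * Real.log (1 / (1 - (t/ρ) ^ 2))) * M := by
          field_simp

  -- limit ρ → 1⁻
  set S := ‖f z - ∑ j ∈ Finset.range (k + 1), (iteratedDeriv j f 0 / (j.factorial : ℂ)) * z ^ j‖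
  set Φ : ℝ → ℝ := fun ρ => (t/ρ) ^ (k + 1) * (1 + (1 / Real.pi) * Real.log (1 / (1 - (t/ρ) ^ 2))) * M
    with hΦ
  have hcont : ContinuousAt Φ 1 := by
    have h1 : ContinuousAt (fun ρ : ℝ => t/ρ) 1 := by
      apply ContinuousAt.div continuousAt_const continuousAt_id
      norm_num
    have h2 : ContinuousAt (fun ρ : ℝ => 1 - (t/ρ)^2) 1 := by
      fun_prop (disch := norm_num)
    have hpos : (0:ℝ) < 1 - t^2 := by nlinarith
    have hd : ContinuousAt (fun ρ : ℝ => 1/(1 - (t/ρ)^2)) 1 := by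
      apply ContinuousAt.div continuousAt_const h2
      rw [div_one]
      nlinarith
    have h3 : ContinuousAt (fun ρ : ℝ => Real.log (1/(1 - (t/ρ)^2))) 1 := by
      refine (Real.continuousAt_log ?_).comp hd
      rw [div_one]
      positivity
    exact ((h1.pow _).mul ((continuousAt_const.add (continuousAt_const.mul h3)))).mul
      continuousAt_const
  have hEv : ∀ᶠ ρ in nhdsWithin 1 (Set.Iio 1), S ≤ Φ ρ := by
    have hev1 : ∀ᶠ ρ in nhdsWithin 1 (Set.Iio 1), t < ρ := by
      apply Filter.eventually_iff_exists_mem.2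
      refine ⟨Set.Iio 1 ∩ Set.Ioo t 2, inter_mem_nhdsWithin _
        (Ioo_mem_nhds (by linarith) (by norm_num)), fun ρ hρ => hρ.2.1⟩
    have hev2 : ∀ᶠ ρ : ℝ in nhdsWithin 1 (Set.Iio 1), ρ < 1 :=
      eventually_mem_nhdsWithin.mono fun ρ hρ => hρ
    filter_upwards [hev1, hev2] with ρ h1 h2
    exact hmain ρ h1 h2
  have hle : S ≤ Φ 1 := ge_of_tendsto (hcont.tendsto.mono_left nhdsWithin_le_nhds) hEv
  refine hle.trans_eq ?_
  simp only [hΦ, div_one]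
end

section
/- Let H : ℂ → ℝ be harmonic on all of ℂ, and suppose there exist a real constant c and constants C, R > 0 such that |H(w) − c log|w|²| ≤ C/|w| for all |w| ≥ R. Then c = 0 and H ≡ 0. -/
open Complex intervalIntegral MeasureTheory Metric


open Complex

lemma clm_ext_apply {M : Type*} [NormedAddCommGroup M] [NormedSpace ℝ M]
    (L : ℂ →L[ℝ] M) (w : ℂ) : L w = w.re • L 1 + w.im • L I := by
  have h : w = w.re • (1:ℂ) + w.im • I := by
    simp [Complex.real_smul, Complex.ext_iff]
  conv_lhs => rw [h]
  rw [map_add, L.map_smul, L.map_smul]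

lemma g_entire (H : ℂ → ℝ) (hH : ContDiff ℝ 2 H)
    (hharm : ∀ z : ℂ,
      fderiv ℝ (fun w => fderiv ℝ H w 1) z 1 +
        fderiv ℝ (fun w => fderiv ℝ H w Complex.I) z Complex.I = 0) :
    Differentiable ℂ (fun z => (fderiv ℝ H z 1 : ℂ) - Complex.I * (fderiv ℝ H z Complex.I)) := by
  intro z
  have hf1 : ContDiff ℝ 1 (fderiv ℝ H) := hH.fderiv_right (by norm_num)
  have hD2z : HasFDerivAt (fderiv ℝ H) (fderiv ℝ (fderiv ℝ H) z) z :=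
    ((hf1.differentiable (by norm_num)) z).hasFDerivAt
  set D2 : ℂ →L[ℝ] ℂ →L[ℝ] ℝ := fderiv ℝ (fderiv ℝ H) z with hD2def
  have hsymm : ∀ v w, D2 v w = D2 w v :=
    second_derivative_symmetric (fun y => ((hH.differentiable (by norm_num)) y).hasFDerivAt) hD2z
  have happ : ∀ (a : ℂ), HasFDerivAt (fun w => fderiv ℝ H w a)
      ((ContinuousLinearMap.apply ℝ ℝ a).comp D2) z := fun a =>
    ((ContinuousLinearMap.apply ℝ ℝ a).hasFDerivAt).comp z hD2z
  have e1 : fderiv ℝ (fun w => fderiv ℝ H w 1) z 1 = D2 1 1 := by rw [(happ 1).fderiv]; rfl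
  have eI : fderiv ℝ (fun w => fderiv ℝ H w I) z I = D2 I I := by rw [(happ I).fderiv]; rfl
  have hharm' : D2 1 1 + D2 I I = 0 := by rw [← e1, ← eI]; exact hharm z
  have hu : HasFDerivAt (fun w => ((fderiv ℝ H w 1 : ℝ) : ℂ))
      (Complex.ofRealCLM.comp ((ContinuousLinearMap.apply ℝ ℝ 1).comp D2)) z :=
    Complex.ofRealCLM.hasFDerivAt.comp z (happ 1)
  have hv : HasFDerivAt (fun w => I * ((fderiv ℝ H w I : ℝ) : ℂ))
      (I • (Complex.ofRealCLM.comp ((ContinuousLinearMap.apply ℝ ℝ I).comp D2))) z :=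
    (Complex.ofRealCLM.hasFDerivAt.comp z (happ I)).const_mul I
  have hg := hu.sub hv
  set Lr := Complex.ofRealCLM.comp ((ContinuousLinearMap.apply ℝ ℝ 1).comp D2) -
      I • (Complex.ofRealCLM.comp ((ContinuousLinearMap.apply ℝ ℝ I).comp D2)) with hLrdef
  set a : ℂ := (D2 1 1 : ℂ) - I * (D2 1 I) with hadef
  set Lc : ℂ →L[ℂ] ℂ := ContinuousLinearMap.smulRight (1 : ℂ →L[ℂ] ℂ) a with hLcdef
  have hEq : Lc.restrictScalars ℝ = Lr := by
    apply ContinuousLinearMap.ext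
    intro w
    rw [clm_ext_apply (Lc.restrictScalars ℝ) w, clm_ext_apply Lr w]
    have hII : D2 I I = -(D2 1 1) := by linarith [hharm']
    have hL1 : Lr 1 = (D2 1 1 : ℂ) - I * (D2 1 I) := by
      simp [hLrdef]
    have hLI : Lr I = (D2 1 I : ℂ) + I * (D2 1 1) := by
      simp [hLrdef, hsymm I 1, hII]
    have hC1 : (Lc.restrictScalars ℝ) 1 = a := by simp [hLcdef]
    have hCI : (Lc.restrictScalars ℝ) I = I * a := by simp [hLcdef]
    rw [hL1, hLI, hC1, hCI, hadef]
    ring_nf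
    rw [Complex.I_sq]
    ring
  exact (hasFDerivAt_of_restrictScalars ℝ hg hEq).differentiableAt

open Complex intervalIntegral MeasureTheory Metric

lemma primitive_hasDerivAt (g : ℂ → ℂ) (hg : Differentiable ℂ g) (z₀ : ℂ) :
    HasDerivAt (fun z => ∫ t in (0:ℝ)..1, z * g ((t : ℂ) * z)) (g z₀) z₀ := by
  have hgc : Continuous g := hg.continuous
  have hg' : Continuous (deriv g) := (hg.contDiff (n := 1)).continuous_deriv le_rfl
  -- bounds on the compact set K
  set K : Set ℂ := closedBall (0:ℂ) (‖z₀‖ + 1) with hK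
  obtain ⟨M, hM⟩ := (isCompact_closedBall (0:ℂ) (‖z₀‖+1)).exists_bound_of_continuousOn
    hgc.continuousOn
  obtain ⟨M', hM'⟩ := (isCompact_closedBall (0:ℂ) (‖z₀‖+1)).exists_bound_of_continuousOn
    hg'.continuousOn
  have hM'0 : 0 ≤ M' := le_trans (norm_nonneg _) (hM' 0 (by simp [hK]; positivity))
  -- F' x t
  set F' : ℂ → ℝ → ℂ := fun x t => g ((t:ℂ) * x) + (t:ℂ) * x * deriv g ((t:ℂ) * x) with hF'
  have key := intervalIntegral.hasDerivAt_integral_of_dominated_loc_of_deriv_le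
    (F := fun z (t : ℝ) => z * g ((t:ℂ) * z)) (F' := F') (x₀ := z₀)
    (a := 0) (b := 1) (μ := MeasureTheory.volume)
    (bound := fun _ => M + (‖z₀‖ + 1) * M') (ball_mem_nhds z₀ one_pos)
    (Filter.Eventually.of_forall (fun x => (Continuous.aestronglyMeasurable (by continuity))))
    ((Continuous.mul continuous_const (hgc.comp (by continuity))).intervalIntegrable 0 1)
    (Continuous.aestronglyMeasurable (by
      simp only [hF']
      fun_prop)).restrict
    ?_ (intervalIntegrable_const) ?_
  · -- conclude
    have hFTC : (∫ t in (0:ℝ)..1, F' z₀ t) = g z₀ := by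
      have hder : ∀ t ∈ Set.uIcc (0:ℝ) 1,
          HasDerivAt (fun s : ℝ => (s:ℂ) * g ((s:ℂ) * z₀)) (F' z₀ t) t := by
        intro t _
        have h1 : HasDerivAt (fun s : ℝ => (s:ℂ)) 1 t := by
          exact Complex.ofRealCLM.hasDerivAt (x := t)
        have hpath : HasDerivAt (fun s : ℝ => (s:ℂ) * z₀) z₀ t := by
          simpa using h1.mul_const z₀
        have hgp : HasDerivAt (fun s : ℝ => g ((s:ℂ) * z₀)) (z₀ * deriv g ((t:ℂ) * z₀)) t := by
          have := (((hg ((t:ℂ)*z₀)).hasDerivAt.hasFDerivAt).restrictScalars ℝ).comp_hasDerivAt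
            t hpath
          simpa [smul_eq_mul, mul_comm, Function.comp_def] using this
        have := h1.mul hgp
        rw [hF']
        refine this.congr_deriv ?_
        ring
      rw [intervalIntegral.integral_eq_sub_of_hasDerivAt hder
        (Continuous.intervalIntegrable (by simp only [hF']; fun_prop) 0 1)]
      simp
    rw [hFTC] at key
    exact key.2
  · -- bound
    refine Filter.Eventually.of_forall (fun t ht => fun x hx => ?_)
    have ht' : t ∈ Set.Ioc (0:ℝ) 1 := by
      simpa [Set.uIoc_of_le (zero_le_one)] using ht
    have hxle : ‖x‖ ≤ ‖z₀‖ + 1 := by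
      have := mem_ball_iff_norm.mp hx
      have h2 := norm_sub_norm_le x z₀
      linarith
    have htx : (t:ℂ) * x ∈ closedBall (0:ℂ) (‖z₀‖+1) := by
      simp only [mem_closedBall, dist_zero_right, norm_mul, Complex.norm_real,
        Real.norm_eq_abs, abs_of_pos ht'.1]
      nlinarith [norm_nonneg x, ht'.2, ht'.1.le]
    have hb1 : ‖g ((t:ℂ)*x)‖ ≤ M := hM _ htx
    have hb2 : ‖(t:ℂ) * x * deriv g ((t:ℂ)*x)‖ ≤ (‖z₀‖+1) * M' := by
      rw [norm_mul, norm_mul, Complex.norm_real, Real.norm_eq_abs, abs_of_pos ht'.1]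
      have hd := hM' _ htx
      have h3 : ‖x‖ * ‖deriv g ((t:ℂ)*x)‖ ≤ (‖z₀‖+1) * M' :=
        mul_le_mul hxle hd (norm_nonneg _) (by positivity)
      nlinarith [h3, ht'.2, ht'.1.le,
        mul_nonneg (norm_nonneg x) (norm_nonneg (deriv g ((t:ℂ)*x)))]
    calc ‖F' x t‖ ≤ ‖g ((t:ℂ)*x)‖ + ‖(t:ℂ) * x * deriv g ((t:ℂ)*x)‖ := norm_add_le _ _
      _ ≤ M + (‖z₀‖+1) * M' := add_le_add hb1 hb2
  · -- differentiability in x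
    refine Filter.Eventually.of_forall (fun t ht => fun x hx => ?_)
    have h1 : HasDerivAt (fun z : ℂ => (t:ℂ) * z) (t:ℂ) x := by
      simpa using (hasDerivAt_id x).const_mul (t:ℂ)
    have hgp : HasDerivAt (fun z : ℂ => g ((t:ℂ) * z)) (deriv g ((t:ℂ)*x) * (t:ℂ)) x :=
      (hg ((t:ℂ)*x)).hasDerivAt.comp x h1
    have := (hasDerivAt_id x).mul hgp
    rw [hF']
    refine this.congr_deriv ?_
    simp
    ring


theorem harmonic_liouville (H : ℂ → ℝ) (hH : ContDiff ℝ 2 H)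
    (hharm : ∀ z : ℂ,
      fderiv ℝ (fun w => fderiv ℝ H w 1) z 1 +
        fderiv ℝ (fun w => fderiv ℝ H w Complex.I) z Complex.I = 0)
    (c C R : ℝ) (hC : 0 < C) (hR : 0 < R)
    (hbd : ∀ w : ℂ, R ≤ ‖w‖ → |H w - c * Real.log (‖w‖ ^ 2)| ≤ C / ‖w‖) :
    c = 0 ∧ ∀ w, H w = 0 := by
  have hHd : Differentiable ℝ H := hH.differentiable (by norm_num)
  set g : ℂ → ℂ := fun z => (fderiv ℝ H z 1 : ℂ) - Complex.I * (fderiv ℝ H z Complex.I)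
    with hgdef
  have hg : Differentiable ℂ g := g_entire H hH hharm
  set F : ℂ → ℂ := fun z => ∫ t in (0:ℝ)..1, z * g ((t:ℂ) * z) with hFdef
  have hF : ∀ z, HasDerivAt F (g z) z := primitive_hasDerivAt g hg
  have hFdiff : Differentiable ℂ F := fun z => (hF z).differentiableAt
  have hF0 : F 0 = 0 := by simp [hFdef]
  -- Re F = H - H 0
  have hzero : ∀ z, fderiv ℝ (fun w => (F w).re - H w) z = 0 := by
    intro z
    have hRe : HasFDerivAt (fun w => (F w).re)
        (Complex.reCLM.comp (((1 : ℂ →L[ℂ] ℂ).smulRight (g z)).restrictScalars ℝ)) z :=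
      Complex.reCLM.hasFDerivAt.comp z ((hF z).hasFDerivAt.restrictScalars ℝ)
    have hsub : HasFDerivAt (fun w => (F w).re - H w) _ z := hRe.sub (hHd z).hasFDerivAt
    rw [hsub.fderiv]
    set L := Complex.reCLM.comp (((1 : ℂ →L[ℂ] ℂ).smulRight (g z)).restrictScalars ℝ) -
      fderiv ℝ H z with hL
    have h1 : L 1 = 0 := by
      simp [hL, hgdef]
    have hI : L I = 0 := by
      simp [hL, hgdef, Complex.mul_re]
    refine ContinuousLinearMap.ext fun w => ?_
    rw [clm_ext_apply L w, h1, hI]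
    simp
  have hdiffu : Differentiable ℝ (fun w => (F w).re - H w) :=
    (Complex.reCLM.differentiable.comp (hFdiff.restrictScalars ℝ)).sub hHd
  have hkey : ∀ z, (F z).re = H z - H 0 := by
    intro z
    have := is_const_of_fderiv_eq_zero hdiffu hzero z 0
    rw [hF0] at this
    simp at this
    linarith
  -- Liouville applied to exp(s • F)
  set s : ℝ := if 0 ≤ c then -1 else 1 with hs
  have hsc : s * c ≤ 0 := by
    by_cases h : 0 ≤ c <;> simp [hs, h] <;> nlinarith [not_le.mp (by assumption : ¬ 0 ≤ c)]
  have hsabs : |s| = 1 := by by_cases h : 0 ≤ c <;> simp [hs, h]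
  have hsne : s ≠ 0 := by intro h; rw [h] at hsabs; simp at hsabs
  set R' : ℝ := max R 1 with hR'
  obtain ⟨M₀, hM₀⟩ := (isCompact_closedBall (0:ℂ) R').exists_bound_of_continuousOn
    (hH.continuous.continuousOn)
  have hA : ∀ z : ℂ, s * H z ≤ max C M₀ := by
    intro z
    by_cases hz : R' ≤ ‖z‖
    · have hz1 : (1:ℝ) ≤ ‖z‖ := le_trans (le_max_right R 1) hz
      have hbz := hbd z (le_trans (le_max_left R 1) hz)
      have hlog : 0 ≤ Real.log (‖z‖ ^ 2) := Real.log_nonneg (by nlinarith)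
      have h2 : s * (H z - c * Real.log (‖z‖^2)) ≤ |H z - c * Real.log (‖z‖^2)| := by
        calc s * (H z - c * Real.log (‖z‖^2)) ≤ |s * (H z - c * Real.log (‖z‖^2))| :=
              le_abs_self _
          _ = |H z - c * Real.log (‖z‖^2)| := by rw [abs_mul, hsabs, one_mul]
      have hexp : s * H z = s * c * Real.log (‖z‖^2) + s * (H z - c * Real.log (‖z‖^2)) := by
        ring
      have h3 : s * c * Real.log (‖z‖^2) ≤ 0 := mul_nonpos_of_nonpos_of_nonneg hsc hlog
      have h4 : C / ‖z‖ ≤ C := by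
        rw [div_le_iff₀ (by linarith)]
        nlinarith
      have := le_max_left C M₀
      linarith
    · have hzK : z ∈ closedBall (0:ℂ) R' := by
        simp only [mem_closedBall, dist_zero_right]
        linarith [not_le.mp hz]
      have habs : |H z| ≤ M₀ := by
        have := hM₀ z hzK
        rwa [Real.norm_eq_abs] at this
      have h5 : s * H z ≤ |H z| := by
        calc s * H z ≤ |s * H z| := le_abs_self _
          _ = |H z| := by rw [abs_mul, hsabs, one_mul]
      have := le_max_right C M₀
      linarith
  set G : ℂ → ℂ := fun z => Complex.exp ((s:ℂ) * F z) with hG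
  have hGdiff : Differentiable ℂ G := (hFdiff.const_mul _).cexp
  have hGnorm : ∀ z, ‖G z‖ = Real.exp (s * (H z - H 0)) := by
    intro z
    rw [hG]
    simp only [Complex.norm_exp, Complex.re_ofReal_mul, hkey z]
  have hGbd : Bornology.IsBounded (Set.range G) := by
    rw [isBounded_iff_forall_norm_le]
    refine ⟨Real.exp (max C M₀ + |s * H 0|), ?_⟩
    rintro y ⟨z, rfl⟩
    rw [hGnorm z]
    apply Real.exp_le_exp.mpr
    have := hA z
    have h2 : -(s * H 0) ≤ |s * H 0| := neg_le_abs _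
    nlinarith
  have hHconst : ∀ z, H z = H 0 := by
    intro z
    have hz0 := hGdiff.apply_eq_apply_of_bounded hGbd z 0
    have heq : ‖G z‖ = ‖G 0‖ := by rw [hz0]
    rw [hGnorm z, hGnorm 0] at heq
    simp only [sub_self, mul_zero, Real.exp_zero] at heq
    rw [← Real.exp_zero] at heq
    have h0 := Real.exp_injective heq
    rcases mul_eq_zero.mp h0 with h | h
    · exact absurd h hsne
    · linarith
  -- conclude c = 0
  have hc0 : c = 0 := by
    by_contra hc0
    have hcabs : 0 < |c| := abs_pos.mpr hc0
    set t : ℝ := max R' (Real.exp ((|H 0| + C) / |c|)) with ht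
    have ht1 : (1:ℝ) ≤ t := le_trans (le_max_right R 1) (le_max_left _ _)
    have htR : R ≤ t := le_trans (le_max_left R 1) (le_max_left _ _)
    have ht0 : 0 < t := by linarith
    have hwnorm : ‖(t:ℂ)‖ = t := by
      rw [Complex.norm_real, Real.norm_eq_abs, abs_of_pos ht0]
    have hbt := hbd (t:ℂ) (by rw [hwnorm]; exact htR)
    rw [hwnorm, hHconst] at hbt
    have hlogt : (|H 0| + C) / |c| ≤ Real.log t := by
      rw [Real.le_log_iff_exp_le ht0]
      exact le_max_right _ _
    have hlogsq : Real.log (t ^ 2) = 2 * Real.log t := by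
      rw [Real.log_pow]
      push_cast; ring
    have hlognn : 0 ≤ Real.log t := Real.log_nonneg ht1
    have hub : |c * Real.log (t^2)| ≤ C / t + |H 0| := by
      have := abs_sub_abs_le_abs_sub (c * Real.log (t^2)) (H 0)
      have habs2 : |c * Real.log (t^2) - H 0| = |H 0 - c * Real.log (t^2)| := abs_sub_comm _ _
      calc |c * Real.log (t^2)| ≤ |c * Real.log (t^2) - H 0| + |H 0| := by
            have := abs_sub_abs_le_abs_sub (c * Real.log (t^2)) (H 0)
            have h7 := abs_add_le (c * Real.log (t^2) - H 0) (H 0)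
            calc |c * Real.log (t^2)| = |(c * Real.log (t^2) - H 0) + H 0| := by ring_nf
              _ ≤ _ := abs_add_le _ _
        _ ≤ C / t + |H 0| := by rw [habs2]; linarith
    have hlb : 2 * (|H 0| + C) ≤ |c * Real.log (t^2)| := by
      rw [abs_mul, hlogsq, _root_.abs_of_nonneg (by linarith : (0:ℝ) ≤ 2 * Real.log t)]
      have h9 : (|H 0| + C) ≤ |c| * Real.log t := (div_le_iff₀' hcabs).mp hlogt
      nlinarith
    have hCt : C / t ≤ C := by
      rw [div_le_iff₀ ht0]; nlinarith
    linarith [abs_nonneg (H 0)]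
  refine ⟨hc0, fun w => ?_⟩
  rw [hHconst w]
  by_contra hH0
  have hA0 : 0 < |H 0| := abs_pos.mpr hH0
  set t : ℝ := max R (2 * C / |H 0|) with ht
  have htR : R ≤ t := le_max_left _ _
  have ht0 : 0 < t := lt_of_lt_of_le hR htR
  have hwnorm : ‖(t:ℂ)‖ = t := by
    rw [Complex.norm_real, Real.norm_eq_abs, abs_of_pos ht0]
  have hbt := hbd (t:ℂ) (by rw [hwnorm]; exact htR)
  rw [hwnorm, hHconst, hc0] at hbt
  simp only [zero_mul, sub_zero] at hbt
  have ht2 : 2 * C / |H 0| ≤ t := le_max_right _ _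
  have : C / t ≤ |H 0| / 2 := by
    rw [div_le_div_iff₀ ht0 (by norm_num : (0:ℝ) < 2)]
    rw [div_le_iff₀ hA0] at ht2
    linarith
  linarith
end

section
/- Let w : ℂ → [0,∞) be continuous with ∫_ℂ (1+|ξ|)^{n} w(ξ) dA(ξ) < ∞, let π be a polynomial, and suppose Φ : ℂ → ℂ is continuously differentiable with ∂̄Φ = conj(π) · w on ℂ and Φ(z) = O(|z|^{-n-1}) as |z| → ∞. Then ∫_ℂ q(ξ) conj(π(ξ)) w(ξ) dA(ξ) = 0 for every polynomial q of degree at most n−1. -/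
open MeasureTheory Set Complex Filter

lemma poly_bound (q : Polynomial ℂ) : ∃ B : ℝ, 0 ≤ B ∧ ∀ z : ℂ, 1 ≤ ‖z‖ →
    ‖q.eval z‖ ≤ B * ‖z‖ ^ q.natDegree := by
  refine ⟨∑ i ∈ Finset.range (q.natDegree + 1), ‖q.coeff i‖,
    Finset.sum_nonneg fun i _ => norm_nonneg _, fun z hz => ?_⟩
  rw [Polynomial.eval_eq_sum_range, Finset.sum_mul]
  refine (norm_sum_le _ _).trans (Finset.sum_le_sum fun i hi => ?_)
  rw [norm_mul, norm_pow]
  exact mul_le_mul_of_nonneg_left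
    (pow_le_pow_right₀ hz (Nat.lt_succ_iff.mp (Finset.mem_range.mp hi))) (norm_nonneg _)

lemma setIntegral_reProdIm (g : ℂ → ℂ) (a b c d : ℝ) (hab : a ≤ b) (hcd : c ≤ d)
    (hg : IntegrableOn g (Set.Icc a b ×ℂ Set.Icc c d)) :
    ∫ x in a..b, ∫ y in c..d, g (x + y * Complex.I) =
      ∫ z in Set.Icc a b ×ℂ Set.Icc c d, g z := by
  have hpre : Set.Icc a b ×ℂ Set.Icc c d
      = measurableEquivRealProd ⁻¹' (Set.Icc a b ×ˢ Set.Icc c d) := rfl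
  have h1 : ∫ z in Set.Icc a b ×ℂ Set.Icc c d, g z
      = ∫ p in Set.Icc a b ×ˢ Set.Icc c d, g (measurableEquivRealProd.symm p) := by
    rw [hpre]
    rw [← MeasurePreserving.setIntegral_preimage_emb volume_preserving_equiv_real_prod
      (measurableEquivRealProd.measurableEmbedding) (fun p => g (measurableEquivRealProd.symm p))
      (Set.Icc a b ×ˢ Set.Icc c d)]
    simp
  rw [h1]
  have hG : IntegrableOn (fun p => g (measurableEquivRealProd.symm p))
      (Set.Icc a b ×ˢ Set.Icc c d) volume := by
    refine (volume_preserving_equiv_real_prod.integrableOn_comp_preimage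
      measurableEquivRealProd.measurableEmbedding).mp ?_
    have : ((fun p => g (measurableEquivRealProd.symm p)) ∘ ⇑measurableEquivRealProd) = g := by
      funext z; simp
    rw [this, ← hpre]; exact hg
  rw [MeasureTheory.Measure.volume_eq_prod] at hG ⊢
  rw [setIntegral_prod _ hG]
  rw [intervalIntegral.integral_of_le hab, ← integral_Icc_eq_integral_Ioc]
  refine setIntegral_congr_fun measurableSet_Icc (fun x _ => ?_)
  rw [intervalIntegral.integral_of_le hcd, ← integral_Icc_eq_integral_Ioc]
  refine setIntegral_congr_fun measurableSet_Icc (fun y _ => ?_)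
  rw [measurableEquivRealProd_symm_apply, Complex.mk_eq_add_mul_I]

/-- Normalized planar area measure: the unit disk has unit area. -/
noncomputable def dA : Measure ℂ := (ENNReal.ofReal Real.pi)⁻¹ • volume

theorem orthogonality_from_dbar (n : ℕ) (w : ℂ → ℝ) (hwc : Continuous w)
    (hw0 : ∀ ξ, 0 ≤ w ξ)
    (hmom : Integrable (fun ξ => (1 + ‖ξ‖) ^ n * w ξ) dA)
    (p : Polynomial ℂ) (Φ : ℂ → ℂ) (hΦ : ContDiff ℝ 1 Φ)
    (hdbar : ∀ z : ℂ,
      (fderiv ℝ Φ z 1 + Complex.I * fderiv ℝ Φ z Complex.I) / 2 =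
        (starRingEnd ℂ) (p.eval z) * (w z : ℂ))
    (C R : ℝ) (hdecay : ∀ z : ℂ, R ≤ ‖z‖ → ‖Φ z‖ ≤ C / ‖z‖ ^ (n + 1)) :
    ∀ q : Polynomial ℂ, q.degree < n →
      ∫ ξ, q.eval ξ * (starRingEnd ℂ) (p.eval ξ) * (w ξ : ℂ) ∂dA = 0 := by
  intro q hq
  set g : ℂ → ℂ := fun ξ => q.eval ξ * (starRingEnd ℂ) (p.eval ξ) * (w ξ : ℂ) with hg_def
  by_cases hqz : q = 0
  · simp [hqz, g]
  by_cases hint : Integrable g dA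
  swap
  · exact integral_undef hint
  have hc0 : (ENNReal.ofReal Real.pi)⁻¹ ≠ 0 := by
    simp [ENNReal.inv_ne_zero]
  have hctop : (ENNReal.ofReal Real.pi)⁻¹ ≠ ⊤ := by
    simp [ENNReal.inv_ne_top, Real.pi_pos, Real.pi_ne_zero]
  have hgvol : Integrable g volume := by
    have : dA = (ENNReal.ofReal Real.pi)⁻¹ • volume := rfl
    rw [this] at hint
    exact (integrable_smul_measure hc0 hctop).mp hint
  suffices h : ∫ ξ, g ξ ∂volume = 0 by
    show ∫ ξ, g ξ ∂dA = 0
    rw [show dA = (ENNReal.ofReal Real.pi)⁻¹ • volume from rfl, integral_smul_measure, h,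
      smul_zero]
  -- degree bound
  have hdn : q.natDegree + 1 ≤ n :=
    (Polynomial.natDegree_lt_iff_degree_lt hqz).mpr hq
  -- continuity of g
  have hgc : Continuous g := by
    simp only [hg_def, starRingEnd_apply]
    fun_prop
  -- the product function and its derivative
  have hΦdiff : Differentiable ℝ Φ := hΦ.differentiable one_ne_zero
  set f : ℂ → ℂ := fun z => q.eval z * Φ z with hf_def
  set qd : ℂ → ℂ →L[ℝ] ℂ :=
    fun z => ((1 : ℂ →L[ℂ] ℂ).smulRight (q.derivative.eval z)).restrictScalars ℝ with hqd_def
  have hqd : ∀ z, HasFDerivAt (fun z => q.eval z) (qd z) z :=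
    fun z => ((q.hasDerivAt z).hasFDerivAt).restrictScalars ℝ
  set f' : ℂ → ℂ →L[ℝ] ℂ := fun z => q.eval z • (fderiv ℝ Φ z) + Φ z • qd z with hf'_def
  have hf : ∀ z, HasFDerivAt f (f' z) z := fun z => (hqd z).mul ((hΦdiff z).hasFDerivAt)
  have key : ∀ z, Complex.I • f' z 1 - f' z Complex.I = 2 * Complex.I * g z := by
    intro z
    have h := hdbar z
    simp only [hf'_def, hqd_def, hg_def, ContinuousLinearMap.add_apply,
      ContinuousLinearMap.coe_smul', Pi.smul_apply, ContinuousLinearMap.coe_restrictScalars',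
      ContinuousLinearMap.smulRight_apply, ContinuousLinearMap.one_apply, smul_eq_mul]
    linear_combination (2 * Complex.I * (q.eval z)) * h +
      (- (q.eval z) * (fderiv ℝ Φ z Complex.I)) * Complex.I_sq
  have hfc : Continuous f := by
    simp only [hf_def]
    fun_prop
  -- decay bound for f
  obtain ⟨B, hB0, hBq⟩ := poly_bound q
  set C' : ℝ := max C 0 with hC'_def
  set K : ℝ := B * C' with hK_def
  have hK0 : 0 ≤ K := mul_nonneg hB0 (le_max_right _ _)
  set R₁ : ℝ := max R 1 with hR₁_def
  have hR₁1 : 1 ≤ R₁ := le_max_right _ _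
  have hfbound : ∀ z : ℂ, R₁ ≤ ‖z‖ → ‖f z‖ ≤ K / ‖z‖ ^ 2 := by
    intro z hz
    have hz1 : 1 ≤ ‖z‖ := hR₁1.trans hz
    have hz0 : 0 < ‖z‖ := lt_of_lt_of_le one_pos hz1
    have hΦb : ‖Φ z‖ ≤ C' / ‖z‖ ^ (n + 1) := by
      refine (hdecay z ((le_max_left R 1).trans hz)).trans ?_
      gcongr
      exact le_max_left _ _
    have h1 : ‖f z‖ ≤ (B * ‖z‖ ^ q.natDegree) * (C' / ‖z‖ ^ (n + 1)) := by
      rw [hf_def]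
      calc ‖q.eval z * Φ z‖ = ‖q.eval z‖ * ‖Φ z‖ := norm_mul _ _
      _ ≤ (B * ‖z‖ ^ q.natDegree) * (C' / ‖z‖ ^ (n + 1)) :=
        mul_le_mul (hBq z hz1) hΦb (norm_nonneg _)
          (mul_nonneg hB0 (pow_nonneg (norm_nonneg _) _))
    refine h1.trans ?_
    have hpow : ‖z‖ ^ q.natDegree * ‖z‖ ^ 2 ≤ ‖z‖ ^ (n + 1) := by
      rw [← pow_add]
      exact pow_le_pow_right₀ hz1 (by omega)
    rw [← mul_div_assoc, div_le_div_iff₀ (by positivity) (by positivity)]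
    calc B * ‖z‖ ^ q.natDegree * C' * ‖z‖ ^ 2
        = (B * C') * (‖z‖ ^ q.natDegree * ‖z‖ ^ 2) := by ring
    _ ≤ (B * C') * ‖z‖ ^ (n + 1) := mul_le_mul_of_nonneg_left hpow (by positivity)
    _ = K * ‖z‖ ^ (n + 1) := by rw [hK_def]
  -- the exhausting squares
  set s : ℕ → Set ℂ := fun k => Icc (-(k : ℝ)) (k : ℝ) ×ℂ Icc (-(k : ℝ)) (k : ℝ) with hs_def
  set T : ℕ → ℂ := fun k => ∫ z in s k, g z with hT_def
  have hsm : ∀ k, MeasurableSet (s k) :=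
    fun k => (isClosed_Icc.reProdIm isClosed_Icc).measurableSet
  have hmono : Monotone s := by
    intro i j hij z hz
    rw [Complex.mem_reProdIm] at hz ⊢
    have hij' : (i : ℝ) ≤ j := Nat.cast_le.mpr hij
    exact ⟨Icc_subset_Icc (by linarith) hij' hz.1, Icc_subset_Icc (by linarith) hij' hz.2⟩
  have hunion : ⋃ k, s k = Set.univ := by
    ext z
    simp only [Set.mem_iUnion, Set.mem_univ, iff_true, hs_def, Complex.mem_reProdIm, Set.mem_Icc]
    obtain ⟨k, hk⟩ := exists_nat_ge (max |z.re| |z.im|)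
    have h1 : |z.re| ≤ k := (le_max_left _ _).trans hk
    have h2 : |z.im| ≤ k := (le_max_right _ _).trans hk
    rw [abs_le] at h1 h2
    exact ⟨k, ⟨h1.1, h1.2⟩, ⟨h2.1, h2.2⟩⟩
  have hT1 : Tendsto T atTop (nhds (∫ z, g z)) := by
    have h := tendsto_setIntegral_of_monotone hsm hmono
      (by rw [hunion]; exact hgvol.integrableOn)
    rwa [hunion, setIntegral_univ] at h
  -- the rectangle estimate
  have hrectbound : ∀ k : ℕ, R₁ ≤ (k : ℝ) → ‖T k‖ ≤ 4 * K / (k : ℝ) := by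
    intro k hk
    have hk1 : 1 ≤ (k : ℝ) := hR₁1.trans hk
    have hk0 : 0 < (k : ℝ) := lt_of_lt_of_le one_pos hk1
    have hab : -(k : ℝ) ≤ (k : ℝ) := by linarith
    have huI : Set.uIcc (-(k : ℝ)) (k : ℝ) = Icc (-(k : ℝ)) (k : ℝ) := uIcc_of_le hab
    have hIfun : (fun z => Complex.I • f' z 1 - f' z Complex.I)
        = fun z => 2 * Complex.I * g z := funext key
    have hcmp : IsCompact ((Icc (-(k : ℝ)) (k : ℝ)) ×ℂ (Icc (-(k : ℝ)) (k : ℝ))) :=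
      Metric.isCompact_of_isClosed_isBounded (isClosed_Icc.reProdIm isClosed_Icc)
        ((Metric.isBounded_Icc _ _).reProdIm (Metric.isBounded_Icc _ _))
    have hrect := Complex.integral_boundary_rect_of_continuousOn_of_hasFDerivAt_real f f'
      ⟨-(k : ℝ), -(k : ℝ)⟩ ⟨(k : ℝ), (k : ℝ)⟩ (hfc.continuousOn)
      (fun x _ => hf x)
      (by
        show IntegrableOn (fun z => Complex.I • f' z 1 - f' z Complex.I)
          ((Set.uIcc (-(k : ℝ)) (k : ℝ)) ×ℂ (Set.uIcc (-(k : ℝ)) (k : ℝ))) volume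
        rw [hIfun, huI]
        exact ((continuous_const.mul hgc).continuousOn).integrableOn_compact hcmp)
    have hre1 : (⟨-(k : ℝ), -(k : ℝ)⟩ : ℂ).re = -(k : ℝ) := rfl
    have him1 : (⟨-(k : ℝ), -(k : ℝ)⟩ : ℂ).im = -(k : ℝ) := rfl
    have hre2 : (⟨(k : ℝ), (k : ℝ)⟩ : ℂ).re = (k : ℝ) := rfl
    have him2 : (⟨(k : ℝ), (k : ℝ)⟩ : ℂ).im = (k : ℝ) := rfl
    rw [hre1, him1, hre2, him2] at hrect
    simp only [key] at hrect
    simp only [intervalIntegral.integral_const_mul] at hrect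
    rw [setIntegral_reProdIm g (-(k : ℝ)) k (-(k : ℝ)) k hab hab (hgvol.integrableOn)] at hrect
    have hTk : T k = ∫ z in Icc (-(k : ℝ)) (k : ℝ) ×ℂ Icc (-(k : ℝ)) (k : ℝ), g z := rfl
    -- edge bound
    have hedge : ∀ z : ℂ, ((k : ℝ) ≤ |z.re| ∨ (k : ℝ) ≤ |z.im|) →
        ‖f z‖ ≤ K / (k : ℝ) ^ 2 := by
      intro z hz
      have hzk : (k : ℝ) ≤ ‖z‖ := by
        rcases hz with h | h
        · exact h.trans (Complex.abs_re_le_norm z)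
        · exact h.trans (Complex.abs_im_le_norm z)
      refine (hfbound z (hk.trans hzk)).trans ?_
      gcongr <;> first | exact hK0 | exact hk0 | positivity
    have M0 : 0 ≤ K / (k : ℝ) ^ 2 := by positivity
    have hside : ∀ (φ : ℝ → ℂ), (∀ x ∈ Set.uIoc (-(k : ℝ)) (k : ℝ), ‖f (φ x)‖ ≤ K / (k : ℝ) ^ 2)
        → ‖∫ x in (-(k : ℝ))..(k : ℝ), f (φ x)‖ ≤ (K / (k : ℝ) ^ 2) * (2 * k) := by
      intro φ hφ
      have := intervalIntegral.norm_integral_le_of_norm_le_const hφ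
      have habs : |(k : ℝ) - (-(k : ℝ))| = 2 * k := by
        rw [sub_neg_eq_add, _root_.abs_of_nonneg (by linarith)]; ring
      rwa [habs] at this
    have hb1 : ‖∫ x in (-(k : ℝ))..(k : ℝ), f (x + (-(k : ℝ) : ℝ) * Complex.I)‖
        ≤ (K / (k : ℝ) ^ 2) * (2 * k) := by
      refine hside _ (fun x _ => hedge _ (Or.inr ?_))
      simp [_root_.abs_of_nonneg hk0.le]
    have hb2 : ‖∫ x in (-(k : ℝ))..(k : ℝ), f (x + ((k : ℝ) : ℝ) * Complex.I)‖
        ≤ (K / (k : ℝ) ^ 2) * (2 * k) := by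
      refine hside _ (fun x _ => hedge _ (Or.inr ?_))
      simp [_root_.abs_of_nonneg hk0.le]
    have hb3 : ‖∫ y in (-(k : ℝ))..(k : ℝ), f (((k : ℝ) : ℝ) + y * Complex.I)‖
        ≤ (K / (k : ℝ) ^ 2) * (2 * k) := by
      refine hside _ (fun y _ => hedge _ (Or.inl ?_))
      simp [_root_.abs_of_nonneg hk0.le]
    have hb4 : ‖∫ y in (-(k : ℝ))..(k : ℝ), f ((-(k : ℝ) : ℝ) + y * Complex.I)‖
        ≤ (K / (k : ℝ) ^ 2) * (2 * k) := by
      refine hside _ (fun y _ => hedge _ (Or.inl ?_))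
      simp [_root_.abs_of_nonneg hk0.le]
    -- combine
    have hnorm2I : ‖(2 : ℂ) * Complex.I‖ = 2 := by simp
    have hlhs : ‖2 * Complex.I * T k‖ ≤ 4 * ((K / (k : ℝ) ^ 2) * (2 * k)) := by
      rw [hTk, ← hrect]
      have e1 := norm_sub_le ((((∫ x in (-(k : ℝ))..(k : ℝ), f (x + (-(k : ℝ) : ℝ) * Complex.I)) -
          ∫ x in (-(k : ℝ))..(k : ℝ), f (x + ((k : ℝ) : ℝ) * Complex.I)) +
          Complex.I • ∫ y in (-(k : ℝ))..(k : ℝ), f (((k : ℝ) : ℝ) + y * Complex.I)))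
          (Complex.I • ∫ y in (-(k : ℝ))..(k : ℝ), f ((-(k : ℝ) : ℝ) + y * Complex.I))
      refine e1.trans ?_
      have e2 := norm_add_le (((∫ x in (-(k : ℝ))..(k : ℝ), f (x + (-(k : ℝ) : ℝ) * Complex.I)) -
          ∫ x in (-(k : ℝ))..(k : ℝ), f (x + ((k : ℝ) : ℝ) * Complex.I)))
          (Complex.I • ∫ y in (-(k : ℝ))..(k : ℝ), f (((k : ℝ) : ℝ) + y * Complex.I))
      have e3 := norm_sub_le (∫ x in (-(k : ℝ))..(k : ℝ), f (x + (-(k : ℝ) : ℝ) * Complex.I))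
          (∫ x in (-(k : ℝ))..(k : ℝ), f (x + ((k : ℝ) : ℝ) * Complex.I))
      have es : ∀ x : ℂ, ‖Complex.I • x‖ = ‖x‖ := by
        intro x; rw [norm_smul, Complex.norm_I, one_mul]
      rw [es] at e2
      calc _ ≤ _ + ‖Complex.I • ∫ y in (-(k : ℝ))..(k : ℝ),
          f ((-(k : ℝ) : ℝ) + y * Complex.I)‖ := le_rfl
      _ ≤ _ := by
          rw [es]
          linarith [hb1, hb2, hb3, hb4, e2, e3]
    have hTnorm : ‖2 * Complex.I * T k‖ = 2 * ‖T k‖ := by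
      rw [norm_mul, hnorm2I]
    rw [hTnorm] at hlhs
    have e4 : 4 * ((K / (k : ℝ) ^ 2) * (2 * k)) = 8 * K / (k : ℝ) := by
      field_simp; ring
    rw [e4] at hlhs
    have e5 : 4 * K / (k : ℝ) = (8 * K / (k : ℝ)) / 2 := by ring
    rw [e5]
    linarith
  -- conclude
  have hT0 : Tendsto T atTop (nhds (0 : ℂ)) := by
    refine squeeze_zero_norm' (a := fun k : ℕ => 4 * K / (k : ℝ)) ?_ ?_
    · filter_upwards [eventually_ge_atTop ⌈R₁⌉₊] with k hk
      exact hrectbound k ((Nat.le_ceil R₁).trans (Nat.cast_le.mpr hk))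
    · exact tendsto_const_div_atTop_nhds_zero_nat (4 * K)
  exact tendsto_nhds_unique hT1 hT0
end
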